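/- (Theorem 1, RoAl.) In the noisy non-adaptive group testing model with K ≥ 2, u ∈ [0, 1/2), q ∈ [0, 1/2), 1 ≤ L ≤ N−K, and p = 1/((1−u)K) (so that γ0 = uK/(K−1) < 1), define z(i) = Σ_{l=1}^M X_{li}·(1−Y_l) for each item i. For every constant c0 > 0 there exist constants C_a1, C_a2 > 0, not depending on N, L or K, such that whenever M ≥ (1+c0)·[K(1−u)/((1−q)(1−γ0)²)]·( C_a1·log(K·C(N−K, L−1))/((N−K)−(L−1)) + C_a2·log K ), the event { for every defective item i ∈ S_d, at least L non-defective items j ∉ S_d satisfy z(j) > z(i) } — so that any L items with the largest values of z are all non-defective — has probability at least 1 − exp(−c0·log(K·C(N−K, L−1))) − exp(−c0·log K). -/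

import Mathlib

open MeasureTheory ProbabilityTheory Finset

structure GTModel (Ω : Type) [MeasureSpace Ω] (M N : ℕ) (p u q : ℝ) where
  X : Fin M → Fin N → Ω → Bool
  d : Fin N → Fin M → Ω → Bool
  w : Fin M → Ω → Bool
  measX : ∀ l i, Measurable (X l i)
  measd : ∀ i l, Measurable (d i l)
  measw : ∀ l, Measurable (w l)
  indep : iIndepFun
      (fun t : (Fin M × Fin N) ⊕ ((Fin N × Fin M) ⊕ Fin M) =>
        Sum.elim (fun li => X li.1 li.2)
          (Sum.elim (fun il => d il.1 il.2) (fun l => w l)) t)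
      (ℙ : Measure Ω)
  probX : ∀ l i, (ℙ : Measure Ω) {ω | X l i ω = true} = ENNReal.ofReal p
  probd : ∀ i l, (ℙ : Measure Ω) {ω | d i l ω = true} = ENNReal.ofReal (1 - u)
  probw : ∀ l, (ℙ : Measure Ω) {ω | w l ω = true} = ENNReal.ofReal q

namespace GT8aux


variable {ι : Type*} [Fintype ι] [DecidableEq ι]

/-- Expectation of `F` under the product Bernoulli weights `w`. -/
noncomputable def Ex (w : ι → Bool → ℝ) (F : (ι → Bool) → ℝ) : ℝ :=
  ∑ b : ι → Bool, (∏ i, w i (b i)) * F b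

lemma sum_prod_bool {σ : Type*} [Fintype σ] [DecidableEq σ] (v : σ → Bool → ℝ) :
    ∑ b : σ → Bool, ∏ j, v j (b j) = ∏ j, (v j false + v j true) := by
  have h := Finset.prod_univ_sum (fun _ : σ => (Finset.univ : Finset Bool)) (fun j x => v j x)
  rw [Fintype.piFinset_univ] at h
  rw [← h]
  exact Finset.prod_congr rfl fun j _ => by rw [Fintype.sum_bool]; ring

lemma Ex_congr {w : ι → Bool → ℝ} {F G : (ι → Bool) → ℝ} (h : ∀ b, F b = G b) :
    Ex w F = Ex w G := by
  unfold Ex; exact Finset.sum_congr rfl fun b _ => by rw [h b]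

lemma Ex_prod_coord (w : ι → Bool → ℝ) (g : ι → Bool → ℝ) :
    Ex w (fun b => ∏ i, g i (b i)) = ∏ i, (w i false * g i false + w i true * g i true) := by
  unfold Ex
  have : ∀ b : ι → Bool, (∏ i, w i (b i)) * (∏ i, g i (b i)) = ∏ i, (w i (b i) * g i (b i)) :=
    fun b => (Finset.prod_mul_distrib).symm
  rw [Finset.sum_congr rfl fun b _ => this b]
  exact sum_prod_bool (fun i v => w i v * g i v)

lemma Ex_one (w : ι → Bool → ℝ) (hw1 : ∀ i, w i false + w i true = 1) :
    Ex w (fun _ => 1) = 1 := by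
  have h := Ex_prod_coord w (fun _ _ => 1)
  simp only [mul_one, hw1, Finset.prod_const_one] at h
  exact h

lemma Ex_sum {γ : Type*} (w : ι → Bool → ℝ) (s : Finset γ) (F : γ → (ι → Bool) → ℝ) :
    Ex w (fun b => ∑ y ∈ s, F y b) = ∑ y ∈ s, Ex w (F y) := by
  unfold Ex
  rw [Finset.sum_comm]
  exact Finset.sum_congr rfl fun b _ => by rw [Finset.mul_sum]

lemma Ex_affine (w : ι → Bool → ℝ) (hw1 : ∀ i, w i false + w i true = 1)
    (x y : ℝ) (F : (ι → Bool) → ℝ) :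
    Ex w (fun b => x + y * F b) = x + y * Ex w F := by
  unfold Ex
  simp only [mul_add, Finset.sum_add_distrib, mul_left_comm _ y, ← Finset.mul_sum]
  have h1 : ∑ b : ι → Bool, (∏ i, w i (b i)) * x = x := by
    rw [← Finset.sum_mul, sum_prod_bool w]
    simp only [hw1, Finset.prod_const_one, one_mul]
  rw [h1]

lemma Ex_mul_const (w : ι → Bool → ℝ) (c : ℝ) (F : (ι → Bool) → ℝ) :
    Ex w (fun b => c * F b) = c * Ex w F := by
  unfold Ex
  rw [Finset.mul_sum]
  exact Finset.sum_congr rfl fun b _ => by ring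

lemma Ex_mono {w : ι → Bool → ℝ} (hw0 : ∀ i v, 0 ≤ w i v) {F G : (ι → Bool) → ℝ}
    (h : ∀ b, F b ≤ G b) : Ex w F ≤ Ex w G := by
  unfold Ex
  refine Finset.sum_le_sum fun b _ => ?_
  exact mul_le_mul_of_nonneg_left (h b) (Finset.prod_nonneg fun i _ => hw0 i (b i))

lemma Ex_nonneg {w : ι → Bool → ℝ} (hw0 : ∀ i v, 0 ≤ w i v) {F : (ι → Bool) → ℝ}
    (h : ∀ b, 0 ≤ F b) : 0 ≤ Ex w F := by
  unfold Ex
  exact Finset.sum_nonneg fun b _ =>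
    mul_nonneg (Finset.prod_nonneg fun i _ => hw0 i (b i)) (h b)

lemma Ex_split2 (w : ι → Bool → ℝ) (hw1 : ∀ i, w i false + w i true = 1)
    (P : ι → Prop) [DecidablePred P] (F G : (ι → Bool) → ℝ)
    (hF : ∀ b b', (∀ i, P i → b i = b' i) → F b = F b')
    (hG : ∀ b b', (∀ i, ¬ P i → b i = b' i) → G b = G b') :
    Ex w (fun b => F b * G b) = Ex w F * Ex w G := by
  classical
  set e : ((∀ i : {x // P x}, Bool) × (∀ i : {x // ¬ P x}, Bool)) ≃ (ι → Bool) :=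
    (Equiv.piEquivPiSubtypeProd P fun _ : ι => Bool).symm with he
  have happ : ∀ gh (i : ι), e gh i = if h : P i then gh.1 ⟨i, h⟩ else gh.2 ⟨i, h⟩ := by
    intro gh i
    rfl
  have happ1 : ∀ gh (i : {x // P x}), e gh i.1 = gh.1 i := by
    intro gh i
    rw [happ, dif_pos i.2]
  have happ2 : ∀ gh (i : {x // ¬ P x}), e gh i.1 = gh.2 i := by
    intro gh i
    rw [happ, dif_neg i.2]
  have key : ∀ (H : (ι → Bool) → ℝ), Ex w H
      = ∑ g : (∀ i : {x // P x}, Bool), ∑ h : (∀ i : {x // ¬ P x}, Bool),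
          ((∏ i : {x // P x}, w i.1 (g i)) * (∏ i : {x // ¬ P x}, w i.1 (h i))) * H (e (g, h)) := by
    intro H
    unfold Ex
    rw [← Equiv.sum_comp e (fun b => (∏ i, w i (b i)) * H b), Fintype.sum_prod_type]
    refine Finset.sum_congr rfl fun g _ => Finset.sum_congr rfl fun h _ => ?_
    congr 1
    rw [← Fintype.prod_subtype_mul_prod_subtype P (fun i => w i (e (g, h) i))]
    congr 1
    · exact Finset.prod_congr rfl fun i _ => by rw [happ1 (g, h) i]
    · exact Finset.prod_congr rfl fun i _ => by rw [happ2 (g, h) i]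
  have hFdep : ∀ g h, F (e (g, h)) = F (e (g, fun _ => false)) := by
    intro g h
    refine hF _ _ fun i hi => ?_
    rw [happ, happ, dif_pos hi, dif_pos hi]
  have hGdep : ∀ g h, G (e (g, h)) = G (e ((fun _ => false), h)) := by
    intro g h
    refine hG _ _ fun i hi => ?_
    rw [happ, happ, dif_neg hi, dif_neg hi]
  have m1 : ∑ g : (∀ i : {x // P x}, Bool), ∏ i : {x // P x}, w i.1 (g i) = 1 := by
    rw [sum_prod_bool (fun (i : {x // P x}) v => w i.1 v)]
    simp only [hw1, Finset.prod_const_one]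
  have m2 : ∑ h : (∀ i : {x // ¬ P x}, Bool), ∏ i : {x // ¬ P x}, w i.1 (h i) = 1 := by
    rw [sum_prod_bool (fun (i : {x // ¬ P x}) v => w i.1 v)]
    simp only [hw1, Finset.prod_const_one]
  have hexF : Ex w F = ∑ g : (∀ i : {x // P x}, Bool),
      (∏ i : {x // P x}, w i.1 (g i)) * F (e (g, fun _ => false)) := by
    rw [key F]
    refine Finset.sum_congr rfl fun g _ => ?_
    rw [Finset.sum_congr rfl (fun h _ => by rw [hFdep g h])]
    rw [← Finset.sum_mul, ← Finset.mul_sum, m2, mul_one]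
  have hexG : Ex w G = ∑ h : (∀ i : {x // ¬ P x}, Bool),
      (∏ i : {x // ¬ P x}, w i.1 (h i)) * G (e ((fun _ => false), h)) := by
    rw [key G]
    rw [Finset.sum_comm]
    refine Finset.sum_congr rfl fun h _ => ?_
    rw [Finset.sum_congr rfl (fun g _ => by rw [hGdep g h])]
    rw [← Finset.sum_mul, ← Finset.sum_mul, m1, one_mul]
  rw [key (fun b => F b * G b), hexF, hexG, Finset.sum_mul_sum]
  refine Finset.sum_congr rfl fun g _ => Finset.sum_congr rfl fun h _ => ?_
  rw [hFdep g h, hGdep g h]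
  ring

lemma Ex_factor {κ : Type*} [DecidableEq κ] (w : ι → Bool → ℝ)
    (hw1 : ∀ i, w i false + w i true = 1) (π : ι → κ)
    (s : Finset κ) (F : κ → (ι → Bool) → ℝ)
    (hdep : ∀ k ∈ s, ∀ b b', (∀ i, π i = k → b i = b' i) → F k b = F k b') :
    Ex w (fun b => ∏ k ∈ s, F k b) = ∏ k ∈ s, Ex w (F k) := by
  classical
  induction s using Finset.induction_on with
  | empty => simpa using Ex_one w hw1
  | insert _ _ ha ih =>
    rename_i a s
    rw [Finset.prod_insert ha, ← ih (fun k hk b b' hh => hdep k (Finset.mem_insert_of_mem hk) b b' hh)]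
    have : ∀ b : ι → Bool, (∏ k ∈ insert a s, F k b) = F a b * ∏ k ∈ s, F k b :=
      fun b => Finset.prod_insert ha
    rw [Ex_congr this]
    refine Ex_split2 w hw1 (fun i => π i = a) (F a) (fun b => ∏ k ∈ s, F k b) ?_ ?_
    · intro b b' hh
      exact hdep a (Finset.mem_insert_self a s) b b' hh
    · intro b b' hh
      refine Finset.prod_congr rfl fun k hk => ?_
      refine hdep k (Finset.mem_insert_of_mem hk) b b' fun i hi => ?_
      refine hh i ?_
      show π i ≠ a
      rw [hi]
      rintro rfl
      exact ha hk




lemma exp_le_quad {x : ℝ} (h0 : 0 ≤ x) (h1 : x ≤ 1) : Real.exp x ≤ 1 + x + x ^ 2 := by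
  have hb := Real.exp_bound (x := x) (by rwa [abs_of_nonneg h0]) (n := 2) (by norm_num)
  have h2 : |Real.exp x - (1 + x)| ≤ x ^ 2 * (3 / 4) := by
    have : ∑ i ∈ Finset.range 2, x ^ i / (Nat.factorial i : ℝ) = 1 + x := by
      simp [Finset.sum_range_succ, Nat.factorial]
    rw [this] at hb
    calc |Real.exp x - (1 + x)| ≤ |x| ^ 2 * ((2 + 1 : ℕ) / ((Nat.factorial 2 : ℝ) * 2)) := hb
      _ = x ^ 2 * (3 / 4) := by
          rw [sq_abs]
          norm_num [Nat.factorial]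
  have := (abs_le.1 h2).2
  nlinarith [sq_nonneg x]

lemma exp_neg_le_quad {x : ℝ} (h0 : 0 ≤ x) (h1 : x ≤ 1) : Real.exp (-x) ≤ 1 - x + x ^ 2 := by
  have hb := Real.exp_bound (x := -x) (by rwa [abs_neg, abs_of_nonneg h0]) (n := 2) (by norm_num)
  have h2 : |Real.exp (-x) - (1 - x)| ≤ x ^ 2 * (3 / 4) := by
    have : ∑ i ∈ Finset.range 2, (-x) ^ i / (Nat.factorial i : ℝ) = 1 - x := by
      simp [Finset.sum_range_succ, Nat.factorial]
      ring
    rw [this] at hb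
    calc |Real.exp (-x) - (1 - x)| ≤ |(-x)| ^ 2 * ((2 + 1 : ℕ) / ((Nat.factorial 2 : ℝ) * 2)) := hb
      _ = x ^ 2 * (3 / 4) := by
          rw [sq_abs]
          norm_num [Nat.factorial]
  have := (abs_le.1 h2).2
  nlinarith [sq_nonneg x]

lemma quarter_le_pow (K : ℕ) (hK : 2 ≤ K) : (1 / 4 : ℝ) ≤ (1 - 1 / (K : ℝ)) ^ K := by
  have hK2 : (2 : ℝ) ≤ (K : ℝ) := by exact_mod_cast hK
  have hKpos : (0 : ℝ) < (K : ℝ) := by linarith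
  rcases lt_or_ge K 4 with h4 | h4
  · interval_cases K
    · norm_num
    · have h3 : ((3 : ℕ) : ℝ) = (3 : ℝ) := by norm_num
      rw [h3]
      have : (1 : ℝ) - 1 / 3 = 2 / 3 := by norm_num
      rw [this, div_pow]
      rw [div_le_div_iff₀ (by norm_num) (by positivity)]
      norm_num
  · -- K ≥ 4
    have hK4 : (4 : ℝ) ≤ (K : ℝ) := by exact_mod_cast h4
    set x := (K : ℝ) with hx
    have hbpos : (0 : ℝ) < 1 - 1 / x := by
      rw [sub_pos, div_lt_one hKpos]; linarith
    have hppos : (0 : ℝ) < (1 - 1 / x) ^ K := pow_pos hbpos K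
    rw [← Real.log_le_log_iff (by norm_num) hppos, Real.log_pow]
    have hfrac : 1 - 1 / x = (x / (x - 1))⁻¹ := by
      rw [inv_div, sub_div, div_self (ne_of_gt hKpos)]
    have hlog : Real.log (1 - 1 / x) = - Real.log (x / (x - 1)) := by
      rw [hfrac, Real.log_inv]
    have hlub : Real.log (x / (x - 1)) ≤ 1 / (x - 1) := by
      have h := Real.log_le_sub_one_of_pos (x := x / (x - 1))
        (div_pos (by linarith) (by linarith))
      have h2 : x / (x - 1) - 1 = 1 / (x - 1) := by
        rw [div_sub_one (by linarith : x - 1 ≠ 0)]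
        ring_nf
      linarith [h2 ▸ h]
    have hxx : x * (1 / (x - 1)) ≤ 4 / 3 := by
      rw [mul_one_div, div_le_div_iff₀ (by linarith) (by norm_num : (0:ℝ) < 3)]
      linarith
    have hlog2 : (0.6931471803 : ℝ) < Real.log 2 := Real.log_two_gt_d9
    have hl14 : Real.log (1 / 4) = -(2 * Real.log 2) := by
      rw [one_div, Real.log_inv, show (4 : ℝ) = 2 ^ 2 by norm_num, Real.log_pow]
      push_cast
      ring
    rw [hl14, hlog]
    have : (K : ℝ) * Real.log (x / (x - 1)) ≤ 4 / 3 := by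
      calc (K : ℝ) * Real.log (x / (x - 1)) ≤ (K : ℝ) * (1 / (x - 1)) := by
            apply mul_le_mul_of_nonneg_left hlub (by linarith)
        _ ≤ 4 / 3 := hxx
    nlinarith

-- FRAGMENT: abstract tail lemmas, to append after layer1 content (inside namespace GT8aux)
section tails
variable {ι : Type*} [Fintype ι] [DecidableEq ι]

lemma Ex_single (w : ι → Bool → ℝ) (hw1 : ∀ i, w i false + w i true = 1)
    (t0 : ι) (v0 : Bool) :
    Ex w (fun b => if b t0 = v0 then 1 else 0) = w t0 v0 := by
  classical
  have hpt : ∀ b : ι → Bool, (if b t0 = v0 then (1:ℝ) else 0)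
      = ∏ i, (fun t v => if t = t0 then (if v = v0 then (1:ℝ) else 0) else 1) i (b i) := by
    intro b
    rw [Finset.prod_eq_single_of_mem t0 (Finset.mem_univ t0) (fun t _ ht => if_neg ht)]
    simp
  rw [Ex_congr hpt,
    Ex_prod_coord w (fun t v => if t = t0 then (if v = v0 then (1:ℝ) else 0) else 1)]
  rw [Finset.prod_eq_single_of_mem t0 (Finset.mem_univ t0)
    (fun t _ ht => by simp [if_neg ht, hw1 t])]
  cases v0 <;> simp

lemma Ex_pairI (w : ι → Bool → ℝ) (hw1 : ∀ i, w i false + w i true = 1)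
    {t1 t2 : ι} (hne : t1 ≠ t2) (v1 v2 : Bool) :
    Ex w (fun b => if (b t1 = v1 ∧ b t2 = v2) then 1 else 0) = w t1 v1 * w t2 v2 := by
  classical
  set g : ι → Bool → ℝ := fun t v =>
    if t = t1 then (if v = v1 then (1:ℝ) else 0)
    else if t = t2 then (if v = v2 then (1:ℝ) else 0) else 1 with hg
  have hsub : ∀ (f : ι → ℝ), (∀ t, t ∉ ({t1, t2} : Finset ι) → f t = 1) →
      ∏ t, f t = f t1 * f t2 := by
    intro f hf
    rw [← Finset.prod_subset (Finset.subset_univ ({t1, t2} : Finset ι))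
      (fun t _ ht => hf t ht)]
    exact Finset.prod_pair hne
  have hpt : ∀ b : ι → Bool, (if (b t1 = v1 ∧ b t2 = v2) then (1:ℝ) else 0)
      = ∏ i, g i (b i) := by
    intro b
    rw [hsub (fun i => g i (b i)) (fun t ht => by
      simp only [Finset.mem_insert, Finset.mem_singleton, not_or] at ht
      simp [hg, if_neg ht.1, if_neg ht.2])]
    simp only [hg, if_pos rfl, if_neg (Ne.symm hne), if_pos rfl]
    by_cases h1 : b t1 = v1 <;> by_cases h2 : b t2 = v2 <;> simp [h1, h2]
  rw [Ex_congr hpt, Ex_prod_coord w g]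
  rw [hsub (fun t => w t false * g t false + w t true * g t true) (fun t ht => by
    simp only [Finset.mem_insert, Finset.mem_singleton, not_or] at ht
    simp [hg, if_neg ht.1, if_neg ht.2, hw1 t])]
  simp only [hg, if_pos rfl, if_neg (Ne.symm hne)]
  cases v1 <;> cases v2 <;> simp

lemma Ex_tail_ge (w : ι → Bool → ℝ) (hw0 : ∀ i v, 0 ≤ w i v)
    (hw1 : ∀ i, w i false + w i true = 1)
    {κ : Type*} [Fintype κ] [DecidableEq κ] (π : ι → κ)
    (c : κ → (ι → Bool) → ℝ)
    (hdep : ∀ k b b', (∀ i, π i = k → b i = b' i) → c k b = c k b')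
    (θ : ℝ) :
    Ex w (fun b => if θ ≤ ∑ k, c k b then 1 else 0)
      ≤ Real.exp (-θ) * ∏ k, Ex w (fun b => Real.exp (c k b)) := by
  classical
  have hpt : ∀ b : ι → Bool, (if θ ≤ ∑ k, c k b then (1:ℝ) else 0)
      ≤ Real.exp (-θ) * ∏ k, Real.exp (c k b) := by
    intro b
    rw [← Real.exp_sum, ← Real.exp_add]
    by_cases h : θ ≤ ∑ k, c k b
    · rw [if_pos h]
      have : (0:ℝ) ≤ -θ + ∑ k, c k b := by linarith
      calc (1:ℝ) = Real.exp 0 := (Real.exp_zero).symm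
        _ ≤ Real.exp (-θ + ∑ k, c k b) := Real.exp_le_exp.2 this
    · rw [if_neg h]
      exact (Real.exp_pos _).le
  calc Ex w (fun b => if θ ≤ ∑ k, c k b then 1 else 0)
      ≤ Ex w (fun b => Real.exp (-θ) * ∏ k, Real.exp (c k b)) := Ex_mono hw0 hpt
    _ = Real.exp (-θ) * Ex w (fun b => ∏ k, Real.exp (c k b)) := Ex_mul_const w _ _
    _ = Real.exp (-θ) * ∏ k, Ex w (fun b => Real.exp (c k b)) := by
        rw [Ex_factor w hw1 π univ (fun k b => Real.exp (c k b))
          (fun k _ b b' hh => congrArg Real.exp (hdep k b b' hh))]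

lemma Ex_tail_lt (w : ι → Bool → ℝ) (hw0 : ∀ i v, 0 ≤ w i v)
    (hw1 : ∀ i, w i false + w i true = 1)
    {κ : Type*} [Fintype κ] [DecidableEq κ] (π : ι → κ)
    (c : κ → (ι → Bool) → ℝ)
    (hdep : ∀ k b b', (∀ i, π i = k → b i = b' i) → c k b = c k b')
    (θ : ℝ) :
    Ex w (fun b => if (∑ k, c k b) < θ then 1 else 0)
      ≤ Real.exp θ * ∏ k, Ex w (fun b => Real.exp (-(c k b))) := by
  classical
  have hpt : ∀ b : ι → Bool, (if (∑ k, c k b) < θ then (1:ℝ) else 0)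
      ≤ Real.exp θ * ∏ k, Real.exp (-(c k b)) := by
    intro b
    rw [← Real.exp_sum, ← Real.exp_add]
    by_cases h : (∑ k, c k b) < θ
    · rw [if_pos h]
      have h2 : (0:ℝ) ≤ θ + ∑ k, -(c k b) := by
        rw [Finset.sum_neg_distrib]
        linarith
      calc (1:ℝ) = Real.exp 0 := (Real.exp_zero).symm
        _ ≤ _ := Real.exp_le_exp.2 h2
    · rw [if_neg h]
      exact (Real.exp_pos _).le
  calc Ex w (fun b => if (∑ k, c k b) < θ then 1 else 0)
      ≤ Ex w (fun b => Real.exp θ * ∏ k, Real.exp (-(c k b))) := Ex_mono hw0 hpt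
    _ = Real.exp θ * Ex w (fun b => ∏ k, Real.exp (-(c k b))) := Ex_mul_const w _ _
    _ = Real.exp θ * ∏ k, Ex w (fun b => Real.exp (-(c k b))) := by
        rw [Ex_factor w hw1 π univ (fun k b => Real.exp (-(c k b)))
          (fun k _ b b' hh => congrArg (fun z => Real.exp (-z)) (hdep k b b' hh))]

end tails


/-- index type -/
abbrev idx (M N : ℕ) := (Fin M × Fin N) ⊕ ((Fin N × Fin M) ⊕ Fin M)

/-- weight function -/
noncomputable def wfun (p u q : ℝ) (M N : ℕ) : idx M N → Bool → ℝ :=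
  fun t => Sum.elim (fun _ v => if v then p else 1 - p)
    (Sum.elim (fun _ v => if v then 1 - u else u) (fun _ v => if v then q else 1 - q)) t


section master

variable {Ω : Type} [MeasureSpace Ω] [IsProbabilityMeasure (ℙ : Measure Ω)]
  {M N : ℕ} {p u q : ℝ} (G : GTModel Ω M N p u q)

/-- the joint vector -/
def vvec (G : GTModel Ω M N p u q) (ω : Ω) : idx M N → Bool :=
  fun t => Sum.elim (fun li => G.X li.1 li.2)
    (Sum.elim (fun il => G.d il.1 il.2) (fun l => G.w l)) t ω

lemma meas_f : ∀ t : idx M N, Measurable (fun ω => vvec G ω t) := by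
  rintro (⟨l, i⟩ | ⟨i, l⟩ | l)
  · exact G.measX l i
  · exact G.measd i l
  · exact G.measw l

lemma margin (hp0 : 0 ≤ p) (hu0 : 0 ≤ u) (hu1 : u ≤ 1) (hq0 : 0 ≤ q) :
    ∀ (t : idx M N) (v : Bool),
      (ℙ : Measure Ω) ((fun ω => vvec G ω t) ⁻¹' {v}) = ENNReal.ofReal (wfun p u q M N t v) := by
  have key : ∀ (f : Ω → Bool) (r : ℝ), Measurable f → 0 ≤ r →
      (ℙ : Measure Ω) {ω | f ω = true} = ENNReal.ofReal r →
      ∀ v : Bool, (ℙ : Measure Ω) (f ⁻¹' {v}) = ENNReal.ofReal (if v then r else 1 - r) := by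
    intro f r hf hr htrue v
    have hset : f ⁻¹' {true} = {ω | f ω = true} := by
      ext ω; simp
    cases v with
    | true => simpa [hset] using htrue
    | false =>
      have hcompl : f ⁻¹' {false} = (f ⁻¹' {true})ᶜ := by
        ext ω; simp
      rw [hcompl, prob_compl_eq_one_sub (hf (measurableSet_singleton true)), hset, htrue]
      rw [← ENNReal.ofReal_one, ← ENNReal.ofReal_sub _ hr]
      simp
  rintro (⟨l, i⟩ | ⟨i, l⟩ | l) v
  · exact key _ p (G.measX l i) hp0 (G.probX l i) v
  · have h := key (fun ω => vvec G ω (Sum.inr (Sum.inl (i, l)))) (1 - u) (G.measd i l)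
      (by linarith) (G.probd i l) v
    cases v with
    | true => simpa [wfun] using h
    | false =>
      rw [show (1 : ℝ) - (1 - u) = u by ring] at h
      simpa [wfun] using h
  · exact key _ q (G.measw l) hq0 (G.probw l) v

lemma master (hp0 : 0 ≤ p) (hu0 : 0 ≤ u) (hu1 : u ≤ 1) (hq0 : 0 ≤ q)
    (hw0 : ∀ (t : idx M N) v, 0 ≤ wfun p u q M N t v)
    (Φ : (idx M N → Bool) → Prop) [DecidablePred Φ] :
    (ℙ : Measure Ω) {ω | Φ (vvec G ω)}
      = ENNReal.ofReal (Ex (wfun p u q M N) (fun b => if Φ b then 1 else 0)) := by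
  classical
  have hsplit : {ω | Φ (vvec G ω)}
      = ⋃ b ∈ (Finset.univ.filter Φ), ⋂ t, (fun ω => vvec G ω t) ⁻¹' {b t} := by
    ext ω
    simp only [Set.mem_setOf_eq, Set.mem_iUnion, Set.mem_iInter, Set.mem_preimage,
      Set.mem_singleton_iff, Finset.mem_filter, Finset.mem_univ, true_and]
    constructor
    · intro h
      exact ⟨vvec G ω, h, fun t => rfl⟩
    · rintro ⟨b, hb, hbe⟩
      have : vvec G ω = b := funext hbe
      rwa [this]
  rw [hsplit]
  have hmeas : ∀ b : idx M N → Bool, MeasurableSet (⋂ t, (fun ω => vvec G ω t) ⁻¹' {b t}) :=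
    fun b => MeasurableSet.iInter fun t => (meas_f G t) (measurableSet_singleton (b t))
  have hdisj : Set.PairwiseDisjoint (↑(Finset.univ.filter Φ) : Set (idx M N → Bool))
      (fun b => ⋂ t, (fun ω => vvec G ω t) ⁻¹' {b t}) := by
    intro b _ b' _ hne
    refine Set.disjoint_left.2 fun ω hω hω' => hne ?_
    simp only [Set.mem_iInter, Set.mem_preimage, Set.mem_singleton_iff] at hω hω'
    funext t
    rw [← hω t, ← hω' t]
  rw [measure_biUnion_finset hdisj fun b _ => hmeas b]
  have hprod : ∀ b : idx M N → Bool,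
      (ℙ : Measure Ω) (⋂ t, (fun ω => vvec G ω t) ⁻¹' {b t})
        = ENNReal.ofReal (∏ t, wfun p u q M N t (b t)) := by
    intro b
    have := G.indep.meas_iInter (m := fun _ => inferInstance) (s := fun t => (fun ω => vvec G ω t) ⁻¹' {b t})
      (fun t => ⟨{b t}, measurableSet_singleton (b t), rfl⟩)
    rw [this]
    rw [ENNReal.ofReal_prod_of_nonneg (fun t _ => hw0 t (b t))]
    exact Finset.prod_congr rfl fun t _ => margin G hp0 hu0 hu1 hq0 t (b t)
  rw [Finset.sum_congr rfl fun b _ => hprod b]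
  rw [← ENNReal.ofReal_sum_of_nonneg (fun b _ => Finset.prod_nonneg fun t _ => hw0 t (b t))]
  congr 1
  unfold Ex
  rw [Finset.sum_filter]
  exact Finset.sum_congr rfl fun b _ => by by_cases h : Φ b <;> simp [h]

end master
section model
variable {M N : ℕ}

def xco (l : Fin M) (i : Fin N) : idx M N := Sum.inl (l, i)
def dco (i : Fin N) (l : Fin M) : idx M N := Sum.inr (Sum.inl (i, l))
def wco (l : Fin M) : idx M N := Sum.inr (Sum.inr l)

noncomputable def Yc (Sd : Finset (Fin N)) (b : idx M N → Bool) (l : Fin M) : Bool :=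
  (Sd.sup fun i => b (dco i l) && b (xco l i)) || b (wco l)

noncomputable def zc (Sd : Finset (Fin N)) (b : idx M N → Bool) (j : Fin N) : ℕ :=
  (Finset.univ.filter fun l : Fin M => b (xco l j) = true ∧ Yc Sd b l = false).card

noncomputable def M0c (Sd : Finset (Fin N)) (b : idx M N → Bool) : ℕ :=
  (Finset.univ.filter fun l : Fin M => Yc Sd b l = false).card

def πtest : idx M N → Fin M := Sum.elim Prod.fst (Sum.elim Prod.snd id)

def πpair : idx M N → Option (Fin N) :=
  Sum.elim (fun li => some li.2) (Sum.elim (fun il => some il.1) (fun _ => none))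

lemma Yc_dep (Sd : Finset (Fin N)) (l : Fin M) {b b' : idx M N → Bool}
    (h : ∀ t, πtest t = l → b t = b' t) : Yc Sd b l = Yc Sd b' l := by
  unfold Yc
  rw [Finset.sup_congr rfl (fun i _ => by
    rw [h (dco i l) rfl, h (xco l i) rfl]), h (wco l) rfl]

lemma sup_false_iff (s : Finset (Fin N)) (f : Fin N → Bool) :
    (s.sup f = false) ↔ ∀ i ∈ s, f i = false := by
  simpa using Finset.sup_eq_bot_iff f s

lemma Yc_false_iff (Sd : Finset (Fin N)) (b : idx M N → Bool) (l : Fin M) :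
    (Yc Sd b l = false)
      ↔ ((∀ k ∈ Sd, (b (dco k l) && b (xco l k)) = false) ∧ b (wco l) = false) := by
  unfold Yc
  rw [Bool.or_eq_false_iff, sup_false_iff]

/-- probability that the pair (d,x) is not both true -/
lemma Ex_pair_neg (p u q : ℝ) (k : Fin N) (l : Fin M) :
    Ex (wfun p u q M N) (fun b => if (b (dco k l) && b (xco l k)) = false then 1 else 0)
      = 1 - (1 - u) * p := by
  classical
  have hw1 : ∀ t, wfun p u q M N t false + wfun p u q M N t true = 1 := by
    rintro (⟨l', i'⟩ | ⟨i', l'⟩ | l') <;> simp [wfun]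
  have hpt : ∀ b : idx M N → Bool,
      (if (b (dco k l) && b (xco l k)) = false then (1:ℝ) else 0)
        = 1 + (-1) * (if (b (dco k l) = true ∧ b (xco l k) = true) then 1 else 0) := by
    intro b
    cases hd : b (dco k l) <;> cases hx : b (xco l k) <;> simp [hd, hx]
  rw [Ex_congr hpt, Ex_affine _ hw1, Ex_pairI _ hw1 (by simp [dco, xco]) true true]
  have : wfun p u q M N (dco k l) true = 1 - u := rfl
  rw [this, show wfun p u q M N (xco l k) true = p from rfl]
  ring

lemma prob_Y_false (p u q : ℝ) (Sd : Finset (Fin N)) (l : Fin M) :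
    Ex (wfun p u q M N) (fun b => if Yc Sd b l = false then 1 else 0)
      = (1 - q) * (1 - (1 - u) * p) ^ Sd.card := by
  classical
  have hw1 : ∀ t, wfun p u q M N t false + wfun p u q M N t true = 1 := by
    rintro (⟨l', i'⟩ | ⟨i', l'⟩ | l') <;> simp [wfun]
  set w := wfun p u q M N with hw
  set FQ : Option (Fin N) → (idx M N → Bool) → ℝ := fun o b =>
    Option.elim o (if b (wco l) = false then 1 else 0)
      (fun k => if k ∈ Sd then (if (b (dco k l) && b (xco l k)) = false then 1 else 0) else 1)
    with hFQ
  have hpt : ∀ b : idx M N → Bool, (if Yc Sd b l = false then (1:ℝ) else 0)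
      = ∏ o : Option (Fin N), FQ o b := by
    intro b
    rw [Fintype.prod_option]
    simp only [hFQ, Option.elim]
    rw [Finset.prod_ite_mem Finset.univ Sd
      (fun k => if (b (dco k l) && b (xco l k)) = false then (1:ℝ) else 0),
      Finset.univ_inter, Finset.prod_boole]
    by_cases hy : Yc Sd b l = false
    · rw [if_pos hy]
      obtain ⟨h1, h2⟩ := (Yc_false_iff Sd b l).1 hy
      rw [if_pos h2, if_pos h1, one_mul]
    · rw [if_neg hy]
      rcases not_and_or.1 (fun hc => hy ((Yc_false_iff Sd b l).2 ⟨hc.2, hc.1⟩)) with hc | hc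
      · rw [if_neg hc, zero_mul]
      · rw [if_neg hc, mul_zero]
  rw [Ex_congr hpt]
  rw [Ex_factor w hw1 πpair Finset.univ FQ ?hdep]
  case hdep =>
    rintro (_ | k) _ b b' hh
    · simp only [hFQ, Option.elim]
      rw [hh (wco l) rfl]
    · simp only [hFQ, Option.elim]
      rw [hh (dco k l) rfl, hh (xco l k) rfl]
  rw [Fintype.prod_option]
  have h1 : Ex w (fun b => FQ none b) = 1 - q := by
    have : ∀ b : idx M N → Bool, FQ none b = if b (wco l) = false then 1 else 0 := fun b => rfl
    rw [Ex_congr this, Ex_single w hw1 (wco l) false]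
    rfl
  have h2 : ∀ k : Fin N, Ex w (fun b => FQ (some k) b)
      = if k ∈ Sd then 1 - (1 - u) * p else 1 := by
    intro k
    by_cases hk : k ∈ Sd
    · rw [if_pos hk]
      have : ∀ b : idx M N → Bool, FQ (some k) b
          = if (b (dco k l) && b (xco l k)) = false then 1 else 0 := by
        intro b
        simp only [hFQ, Option.elim, if_pos hk]
      rw [Ex_congr this, hw, Ex_pair_neg]
    · rw [if_neg hk]
      have : ∀ b : idx M N → Bool, FQ (some k) b = 1 := by
        intro b
        simp only [hFQ, Option.elim, if_neg hk]
      rw [Ex_congr this, Ex_one w hw1]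
  rw [h1, Finset.prod_congr rfl (fun k _ => h2 k)]
  rw [Finset.prod_ite_mem Finset.univ Sd (fun _ => 1 - (1 - u) * p), Finset.univ_inter,
    Finset.prod_const]

/-- probability that item i's test is positive-entry and outcome negative -/
lemma prob_A (p u q : ℝ) (Sd : Finset (Fin N)) (l : Fin M) (i : Fin N) (hi : i ∈ Sd) :
    Ex (wfun p u q M N) (fun b => if (b (xco l i) = true ∧ Yc Sd b l = false) then 1 else 0)
      = p * u * ((1 - q) * (1 - (1 - u) * p) ^ (Sd.card - 1)) := by
  classical
  have hw1 : ∀ t, wfun p u q M N t false + wfun p u q M N t true = 1 := by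
    rintro (⟨l', i'⟩ | ⟨i', l'⟩ | l') <;> simp [wfun]
  set w := wfun p u q M N with hw
  set FQ : Option (Fin N) → (idx M N → Bool) → ℝ := fun o b =>
    Option.elim o (if b (wco l) = false then 1 else 0)
      (fun k => if k = i then (if (b (xco l i) = true ∧ b (dco i l) = false) then 1 else 0)
        else if k ∈ Sd then (if (b (dco k l) && b (xco l k)) = false then 1 else 0) else 1)
    with hFQ
  have key : ∀ b : idx M N → Bool, ((b (xco l i) = true ∧ Yc Sd b l = false))
      ↔ ((b (xco l i) = true ∧ b (dco i l) = false)
          ∧ (∀ k ∈ Sd.erase i, (b (dco k l) && b (xco l k)) = false)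
          ∧ b (wco l) = false) := by
    intro b
    rw [Yc_false_iff]
    constructor
    · rintro ⟨hx, h1, h2⟩
      have hdi := h1 i hi
      rw [hx, Bool.and_true] at hdi
      exact ⟨⟨hx, hdi⟩, fun k hk => h1 k (Finset.mem_of_mem_erase hk), h2⟩
    · rintro ⟨⟨hx, hd⟩, h1, h2⟩
      refine ⟨hx, fun k hk => ?_, h2⟩
      by_cases hki : k = i
      · rw [hki, hd, Bool.false_and]
      · exact h1 k (Finset.mem_erase.2 ⟨hki, hk⟩)
  have hpt : ∀ b : idx M N → Bool,
      (if (b (xco l i) = true ∧ Yc Sd b l = false) then (1:ℝ) else 0)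
        = ∏ o : Option (Fin N), FQ o b := by
    intro b
    rw [Fintype.prod_option]
    simp only [hFQ, Option.elim]
    have hsplit : ∀ k : Fin N,
        (if k = i then (if (b (xco l i) = true ∧ b (dco i l) = false) then (1:ℝ) else 0)
          else if k ∈ Sd then (if (b (dco k l) && b (xco l k)) = false then 1 else 0) else 1)
        = (if k = i then (if (b (xco l i) = true ∧ b (dco i l) = false) then (1:ℝ) else 0) else 1)
          * (if k ∈ Sd.erase i then (if (b (dco k l) && b (xco l k)) = false then 1 else 0) else 1) := by
      intro k
      by_cases hki : k = i
      · rw [if_pos hki, if_pos hki, if_neg (show ¬ (k ∈ Sd.erase i) by simp [hki]), mul_one]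
      · rw [if_neg hki, if_neg hki, one_mul]
        by_cases hk : k ∈ Sd
        · rw [if_pos hk, if_pos (Finset.mem_erase.2 ⟨hki, hk⟩)]
        · rw [if_neg hk, if_neg (show ¬ (k ∈ Sd.erase i) from
            fun hc => hk (Finset.mem_of_mem_erase hc))]
    rw [Finset.prod_congr rfl (fun k _ => hsplit k), Finset.prod_mul_distrib]
    rw [Finset.prod_ite_eq' Finset.univ i
      (fun _ => if (b (xco l i) = true ∧ b (dco i l) = false) then (1:ℝ) else 0)]
    rw [Finset.prod_ite_mem Finset.univ (Sd.erase i)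
      (fun k => if (b (dco k l) && b (xco l k)) = false then (1:ℝ) else 0),
      Finset.univ_inter, Finset.prod_boole]
    simp only [Finset.mem_univ, if_pos]
    by_cases hy : (b (xco l i) = true ∧ Yc Sd b l = false)
    · obtain ⟨c1, c2, c3⟩ := (key b).1 hy
      rw [if_pos hy, if_pos c3, if_pos c1, if_pos c2]
      norm_num
    · rw [if_neg hy]
      have := fun c1 c2 c3 => hy ((key b).2 ⟨c1, c2, c3⟩)
      by_cases c1 : (b (xco l i) = true ∧ b (dco i l) = false)
      · by_cases c2 : ∀ k ∈ Sd.erase i, (b (dco k l) && b (xco l k)) = false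
        · rw [if_neg (this c1 c2), if_pos c1, if_pos c2]
          norm_num
        · rw [if_pos c1, if_neg c2]
          norm_num
      · rw [if_neg c1]
        norm_num
  rw [Ex_congr hpt]
  rw [Ex_factor w hw1 πpair Finset.univ FQ ?hdep]
  case hdep =>
    rintro (_ | k) _ b b' hh
    · simp only [hFQ, Option.elim]
      rw [hh (wco l) rfl]
    · by_cases hki : k = i
      · subst hki
        simp only [hFQ, Option.elim, if_pos rfl]
        rw [hh (xco l k) rfl, hh (dco k l) rfl]
      · simp only [hFQ, Option.elim, if_neg hki]
        rw [hh (dco k l) rfl, hh (xco l k) rfl]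
  rw [Fintype.prod_option]
  have h1 : Ex w (fun b => FQ none b) = 1 - q := by
    have : ∀ b : idx M N → Bool, FQ none b = if b (wco l) = false then 1 else 0 := fun b => rfl
    rw [Ex_congr this, Ex_single w hw1 (wco l) false]
    rfl
  have h2 : ∀ k : Fin N, Ex w (fun b => FQ (some k) b)
      = if k = i then p * u else if k ∈ Sd.erase i then 1 - (1 - u) * p else 1 := by
    intro k
    by_cases hki : k = i
    · rw [if_pos hki]
      have : ∀ b : idx M N → Bool, FQ (some k) b
          = if (b (xco l i) = true ∧ b (dco i l) = false) then 1 else 0 := by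
        intro b
        simp only [hFQ, Option.elim, if_pos hki]
      rw [Ex_congr this, Ex_pairI _ hw1 (by simp [dco, xco]) true false]
      rfl
    · rw [if_neg hki]
      by_cases hk : k ∈ Sd
      · rw [if_pos (Finset.mem_erase.2 ⟨hki, hk⟩)]
        have : ∀ b : idx M N → Bool, FQ (some k) b
            = if (b (dco k l) && b (xco l k)) = false then 1 else 0 := by
          intro b
          simp only [hFQ, Option.elim, if_neg hki, if_pos hk]
        rw [Ex_congr this, hw, Ex_pair_neg]
      · rw [if_neg (fun hc => hk (Finset.mem_of_mem_erase hc))]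
        have : ∀ b : idx M N → Bool, FQ (some k) b = 1 := by
          intro b
          simp only [hFQ, Option.elim, if_neg hki, if_neg hk]
        rw [Ex_congr this, Ex_one w hw1]
  rw [h1, Finset.prod_congr rfl (fun k _ => h2 k)]
  have hprodsplit : ∏ k : Fin N,
      (if k = i then p * u else if k ∈ Sd.erase i then 1 - (1 - u) * p else 1)
      = (p * u) * (1 - (1 - u) * p) ^ (Sd.card - 1) := by
    have : ∀ k : Fin N, (if k = i then p * u else if k ∈ Sd.erase i then 1 - (1 - u) * p else 1)
        = (if k = i then p * u else 1) * (if k ∈ Sd.erase i then 1 - (1 - u) * p else 1) := by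
      intro k
      by_cases hki : k = i
      · rw [if_pos hki, if_pos hki, if_neg (show ¬ (k ∈ Sd.erase i) by simp [hki]), mul_one]
      · rw [if_neg hki, if_neg hki, one_mul]
    rw [Finset.prod_congr rfl (fun k _ => this k), Finset.prod_mul_distrib,
      Finset.prod_ite_eq' Finset.univ i (fun _ => p * u),
      Finset.prod_ite_mem Finset.univ (Sd.erase i) (fun _ => 1 - (1 - u) * p),
      Finset.univ_inter, Finset.prod_const, Finset.card_erase_of_mem hi]
    simp only [Finset.mem_univ, if_pos]
  rw [hprodsplit]
  ring

end model

section tailmodel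
variable {M N : ℕ}

lemma wfun_sum1 (p u q : ℝ) (M N : ℕ) :
    ∀ t : idx M N, wfun p u q M N t false + wfun p u q M N t true = 1 := by
  rintro (⟨l', i'⟩ | ⟨i', l'⟩ | l') <;> simp [wfun]

lemma wfun_nonneg {p u q : ℝ} (hp0 : 0 ≤ p) (hp1 : p ≤ 1) (hu0 : 0 ≤ u) (hu1 : u ≤ 1)
    (hq0 : 0 ≤ q) (hq1 : q ≤ 1) (M N : ℕ) :
    ∀ (t : idx M N) v, 0 ≤ wfun p u q M N t v := by
  rintro (⟨l', i'⟩ | ⟨i', l'⟩ | l') v <;> cases v <;> simp [wfun] <;> linarith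

def n0 (y : Fin M → Bool) : ℕ := (Finset.univ.filter fun l : Fin M => y l = false).card

lemma zc_cast (Sd : Finset (Fin N)) (b : idx M N → Bool) (j : Fin N) :
    (zc Sd b j : ℝ)
      = ∑ l : Fin M, (if (b (xco l j) = true ∧ Yc Sd b l = false) then (1:ℝ) else 0) := by
  rw [zc, Finset.card_filter]
  push_cast
  rfl

lemma M0c_cast (Sd : Finset (Fin N)) (b : idx M N → Bool) :
    (M0c Sd b : ℝ) = ∑ l : Fin M, (if Yc Sd b l = false then (1:ℝ) else 0) := by
  rw [M0c, Finset.card_filter]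
  push_cast
  rfl

lemma tail_A {p u q : ℝ} (hp0 : 0 ≤ p) (hp1 : p ≤ 1) (hu0 : 0 ≤ u) (hu1 : u ≤ 1)
    (hq0 : 0 ≤ q) (hq1 : q ≤ 1) (Sd : Finset (Fin N)) (i : Fin N) (hi : i ∈ Sd)
    {t : ℝ} (ht0 : 0 < t) (τ : ℝ) :
    Ex (wfun p u q M N) (fun b => if τ ≤ (zc Sd b i : ℝ) then 1 else 0)
      ≤ Real.exp ((M : ℝ) * (p * u * ((1 - q) * (1 - (1 - u) * p) ^ (Sd.card - 1)))
          * (Real.exp t - 1) - t * τ) := by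
  classical
  set w := wfun p u q M N with hwdef
  have hw1 := wfun_sum1 p u q M N
  have hw0 := wfun_nonneg hp0 hp1 hu0 hu1 hq0 hq1 M N
  set r : ℝ := p * u * ((1 - q) * (1 - (1 - u) * p) ^ (Sd.card - 1)) with hr
  have hr0 : 0 ≤ r := by
    have h1 : (0:ℝ) ≤ 1 - (1 - u) * p := by nlinarith
    exact mul_nonneg (mul_nonneg hp0 hu0)
      (mul_nonneg (by linarith) (pow_nonneg h1 (Sd.card - 1)))
  have hpt : ∀ b : idx M N → Bool, (if τ ≤ (zc Sd b i : ℝ) then (1:ℝ) else 0)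
      = (if t * τ ≤ ∑ l : Fin M,
          t * (if (b (xco l i) = true ∧ Yc Sd b l = false) then (1:ℝ) else 0) then 1 else 0) := by
    intro b
    rw [← Finset.mul_sum]
    rw [← zc_cast Sd b i]
    refine if_congr ?_ rfl rfl
    exact (mul_le_mul_iff_right₀ ht0).symm
  rw [Ex_congr hpt]
  have hbound := Ex_tail_ge w hw0 hw1 πtest
    (fun l b => t * (if (b (xco l i) = true ∧ Yc Sd b l = false) then (1:ℝ) else 0))
    (fun l b b' hh => by
      show t * (if (b (xco l i) = true ∧ Yc Sd b l = false) then (1:ℝ) else 0)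
        = t * (if (b' (xco l i) = true ∧ Yc Sd b' l = false) then (1:ℝ) else 0)
      rw [hh (xco l i) rfl, Yc_dep Sd l hh])
    (t * τ)
  refine hbound.trans ?_
  have hfac : ∀ l : Fin M, Ex w (fun b =>
      Real.exp (t * (if (b (xco l i) = true ∧ Yc Sd b l = false) then (1:ℝ) else 0)))
      = 1 + (Real.exp t - 1) * r := by
    intro l
    have hpt2 : ∀ b : idx M N → Bool,
        Real.exp (t * (if (b (xco l i) = true ∧ Yc Sd b l = false) then (1:ℝ) else 0))
        = 1 + (Real.exp t - 1) * (if (b (xco l i) = true ∧ Yc Sd b l = false) then (1:ℝ) else 0) := by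
      intro b
      by_cases h : (b (xco l i) = true ∧ Yc Sd b l = false)
      · rw [if_pos h, mul_one, mul_one]
        ring
      · rw [if_neg h, mul_zero, mul_zero, Real.exp_zero]
        ring
    rw [Ex_congr hpt2, Ex_affine w hw1, hwdef, prob_A p u q Sd l i hi]
  rw [Finset.prod_congr rfl (fun l _ => hfac l), Finset.prod_const, Finset.card_univ,
    Fintype.card_fin]
  have hbase : (0:ℝ) ≤ 1 + (Real.exp t - 1) * r := by
    have : 1 ≤ Real.exp t := Real.one_le_exp ht0.le
    nlinarith
  have hble : 1 + (Real.exp t - 1) * r ≤ Real.exp ((Real.exp t - 1) * r) := by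
    have := Real.add_one_le_exp ((Real.exp t - 1) * r)
    linarith
  calc Real.exp (-(t * τ)) * (1 + (Real.exp t - 1) * r) ^ M
      ≤ Real.exp (-(t * τ)) * Real.exp ((Real.exp t - 1) * r) ^ M := by
        apply mul_le_mul_of_nonneg_left (pow_le_pow_left₀ hbase hble M) (Real.exp_pos _).le
    _ = Real.exp ((M : ℝ) * r * (Real.exp t - 1) - t * τ) := by
        rw [← Real.exp_nat_mul, ← Real.exp_add]
        congr 1
        ring

lemma tail_B1 {p u q : ℝ} (hp0 : 0 ≤ p) (hp1 : p ≤ 1) (hu0 : 0 ≤ u) (hu1 : u ≤ 1)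
    (hq0 : 0 ≤ q) (hq1 : q ≤ 1) (Sd : Finset (Fin N))
    {t : ℝ} (ht0 : 0 < t) (s : ℝ) :
    Ex (wfun p u q M N) (fun b => if (M0c Sd b : ℝ) < s then 1 else 0)
      ≤ Real.exp (t * s - (M : ℝ) * ((1 - q) * (1 - (1 - u) * p) ^ Sd.card)
          * (1 - Real.exp (-t))) := by
  classical
  set w := wfun p u q M N with hwdef
  have hw1 := wfun_sum1 p u q M N
  have hw0 := wfun_nonneg hp0 hp1 hu0 hu1 hq0 hq1 M N
  set Γ : ℝ := (1 - q) * (1 - (1 - u) * p) ^ Sd.card with hΓ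
  have hΓ0 : 0 ≤ Γ := by
    have h1 : (0:ℝ) ≤ 1 - (1 - u) * p := by nlinarith
    have := pow_nonneg h1 Sd.card
    rw [hΓ]; nlinarith
  have hΓ1 : Γ ≤ 1 := by
    have h1 : (0:ℝ) ≤ 1 - (1 - u) * p := by nlinarith
    have h2 : 1 - (1 - u) * p ≤ 1 := by nlinarith
    have := pow_le_one₀ h1 h2 (n := Sd.card)
    rw [hΓ]
    nlinarith [pow_nonneg h1 Sd.card]
  have hpt : ∀ b : idx M N → Bool, (if (M0c Sd b : ℝ) < s then (1:ℝ) else 0)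
      = (if (∑ l : Fin M, t * (if Yc Sd b l = false then (1:ℝ) else 0)) < t * s
          then 1 else 0) := by
    intro b
    rw [← Finset.mul_sum]
    rw [← M0c_cast Sd b]
    refine if_congr ?_ rfl rfl
    exact (mul_lt_mul_iff_right₀ ht0).symm
  rw [Ex_congr hpt]
  have hbound := Ex_tail_lt w hw0 hw1 πtest
    (fun l b => t * (if Yc Sd b l = false then (1:ℝ) else 0))
    (fun l b b' hh => by
      show t * (if Yc Sd b l = false then (1:ℝ) else 0)
        = t * (if Yc Sd b' l = false then (1:ℝ) else 0)
      rw [Yc_dep Sd l hh])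
    (t * s)
  refine hbound.trans ?_
  have hfac : ∀ l : Fin M, Ex w (fun b =>
      Real.exp (-(t * (if Yc Sd b l = false then (1:ℝ) else 0))))
      = 1 + (Real.exp (-t) - 1) * Γ := by
    intro l
    have hpt2 : ∀ b : idx M N → Bool,
        Real.exp (-(t * (if Yc Sd b l = false then (1:ℝ) else 0)))
        = 1 + (Real.exp (-t) - 1) * (if Yc Sd b l = false then (1:ℝ) else 0) := by
      intro b
      by_cases h : Yc Sd b l = false
      · rw [if_pos h, mul_one, mul_one]
        ring
      · rw [if_neg h, mul_zero, mul_zero, neg_zero, Real.exp_zero]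
        ring
    rw [Ex_congr hpt2, Ex_affine w hw1, hwdef, prob_Y_false p u q Sd l]
  rw [Finset.prod_congr rfl (fun l _ => hfac l), Finset.prod_const, Finset.card_univ,
    Fintype.card_fin]
  have hexpt : Real.exp (-t) ≤ 1 := Real.exp_le_one_iff.2 (by linarith)
  have hbase : (0:ℝ) ≤ 1 + (Real.exp (-t) - 1) * Γ := by
    nlinarith [Real.exp_pos (-t)]
  have hble : 1 + (Real.exp (-t) - 1) * Γ ≤ Real.exp ((Real.exp (-t) - 1) * Γ) := by
    have := Real.add_one_le_exp ((Real.exp (-t) - 1) * Γ)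
    linarith
  calc Real.exp (t * s) * (1 + (Real.exp (-t) - 1) * Γ) ^ M
      ≤ Real.exp (t * s) * Real.exp ((Real.exp (-t) - 1) * Γ) ^ M := by
        apply mul_le_mul_of_nonneg_left (pow_le_pow_left₀ hbase hble M) (Real.exp_pos _).le
    _ = Real.exp (t * s - (M : ℝ) * Γ * (1 - Real.exp (-t))) := by
        rw [← Real.exp_nat_mul, ← Real.exp_add]
        congr 1
        ring

lemma tail_col {p u q : ℝ} (hp0 : 0 ≤ p) (hp1 : p ≤ 1) (hu0 : 0 ≤ u) (hu1 : u ≤ 1)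
    (hq0 : 0 ≤ q) (hq1 : q ≤ 1) (y : Fin M → Bool) (j : Fin N)
    {t : ℝ} (ht0 : 0 < t) (τ : ℝ) :
    Ex (wfun p u q M N) (fun b =>
        if (∑ l : Fin M, (if y l = false then (if b (xco l j) = true then (1:ℝ) else 0) else 0)) < τ
        then 1 else 0)
      ≤ Real.exp (t * τ - p * (1 - Real.exp (-t)) * (n0 y : ℝ)) := by
  classical
  set w := wfun p u q M N with hwdef
  have hw1 := wfun_sum1 p u q M N
  have hw0 := wfun_nonneg hp0 hp1 hu0 hu1 hq0 hq1 M N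
  have hpt : ∀ b : idx M N → Bool,
      (if (∑ l : Fin M, (if y l = false then (if b (xco l j) = true then (1:ℝ) else 0) else 0)) < τ
        then (1:ℝ) else 0)
      = (if (∑ l : Fin M,
          t * (if y l = false then (if b (xco l j) = true then (1:ℝ) else 0) else 0)) < t * τ
          then 1 else 0) := by
    intro b
    rw [← Finset.mul_sum]
    refine if_congr ?_ rfl rfl
    exact (mul_lt_mul_iff_right₀ ht0).symm
  rw [Ex_congr hpt]
  have hbound := Ex_tail_lt w hw0 hw1 πtest
    (fun l b => t * (if y l = false then (if b (xco l j) = true then (1:ℝ) else 0) else 0))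
    (fun l b b' hh => by
      show t * (if y l = false then (if b (xco l j) = true then (1:ℝ) else 0) else 0)
        = t * (if y l = false then (if b' (xco l j) = true then (1:ℝ) else 0) else 0)
      rw [hh (xco l j) rfl])
    (t * τ)
  refine hbound.trans ?_
  have hexpt : Real.exp (-t) ≤ 1 := Real.exp_le_one_iff.2 (by linarith)
  have hfac : ∀ l : Fin M, Ex w (fun b =>
      Real.exp (-(t * (if y l = false then (if b (xco l j) = true then (1:ℝ) else 0) else 0))))
      = if y l = false then 1 + (Real.exp (-t) - 1) * p else 1 := by
    intro l
    by_cases hy : y l = false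
    · rw [if_pos hy]
      have hpt2 : ∀ b : idx M N → Bool,
          Real.exp (-(t * (if y l = false then (if b (xco l j) = true then (1:ℝ) else 0) else 0)))
          = 1 + (Real.exp (-t) - 1) * (if b (xco l j) = true then (1:ℝ) else 0) := by
        intro b
        rw [if_pos hy]
        by_cases h : b (xco l j) = true
        · rw [if_pos h, mul_one, mul_one]
          ring
        · rw [if_neg h, mul_zero, mul_zero, neg_zero, Real.exp_zero]
          ring
      rw [Ex_congr hpt2, Ex_affine w hw1]
      have := Ex_single w hw1 (xco l j) true
      rw [this]
      rfl
    · rw [if_neg hy]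
      have hpt2 : ∀ b : idx M N → Bool,
          Real.exp (-(t * (if y l = false then (if b (xco l j) = true then (1:ℝ) else 0) else 0)))
          = 1 := by
        intro b
        rw [if_neg hy, mul_zero, neg_zero, Real.exp_zero]
      rw [Ex_congr hpt2, Ex_one w hw1]
  rw [Finset.prod_congr rfl (fun l _ => hfac l)]
  rw [← Finset.prod_filter_mul_prod_filter_not Finset.univ (fun l => y l = false)]
  rw [Finset.prod_congr rfl (fun l hl => if_pos (Finset.mem_filter.1 hl).2),
    Finset.prod_congr rfl (fun l hl => if_neg (Finset.mem_filter.1 hl).2),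
    Finset.prod_const, Finset.prod_const, one_pow, mul_one]
  have hbase : (0:ℝ) ≤ 1 + (Real.exp (-t) - 1) * p := by
    nlinarith [Real.exp_pos (-t)]
  have hble : 1 + (Real.exp (-t) - 1) * p ≤ Real.exp ((Real.exp (-t) - 1) * p) := by
    have := Real.add_one_le_exp ((Real.exp (-t) - 1) * p)
    linarith
  calc Real.exp (t * τ) * (1 + (Real.exp (-t) - 1) * p) ^ (n0 y)
      ≤ Real.exp (t * τ) * Real.exp ((Real.exp (-t) - 1) * p) ^ (n0 y) := by
        apply mul_le_mul_of_nonneg_left (pow_le_pow_left₀ hbase hble _) (Real.exp_pos _).le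
    _ = Real.exp (t * τ - p * (1 - Real.exp (-t)) * (n0 y : ℝ)) := by
        rw [← Real.exp_nat_mul, ← Real.exp_add]
        congr 1
        ring

end tailmodel

section tbj
variable {M N : ℕ}

lemma Ex_zero {ι : Type*} [Fintype ι] [DecidableEq ι] (w : ι → Bool → ℝ) :
    Ex w (fun _ => 0) = 0 := by simp [Ex]

lemma tail_BJ {p u q : ℝ} (hp0 : 0 ≤ p) (hp1 : p ≤ 1) (hu0 : 0 ≤ u) (hu1 : u ≤ 1)
    (hq0 : 0 ≤ q) (hq1 : q ≤ 1) (Sd J : Finset (Fin N)) (hJSd : ∀ k ∈ J, k ∉ Sd)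
    (τ s' cb : ℝ) (hcb0 : 0 ≤ cb)
    (hcol : ∀ y : Fin M → Bool, s' ≤ (n0 y : ℝ) → ∀ j ∈ J,
      Ex (wfun p u q M N) (fun b =>
        if (∑ l : Fin M, (if y l = false then (if b (xco l j) = true then (1:ℝ) else 0) else 0)) < τ
        then 1 else 0) ≤ cb) :
    Ex (wfun p u q M N) (fun b =>
        if ((∀ j ∈ J, (zc Sd b j : ℝ) < τ) ∧ s' ≤ (M0c Sd b : ℝ)) then 1 else 0)
      ≤ cb ^ J.card := by
  classical
  set w := wfun p u q M N with hwdef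
  have hw1 := wfun_sum1 p u q M N
  have hw0 := wfun_nonneg hp0 hp1 hu0 hu1 hq0 hq1 M N
  set πJ : idx M N → Option (Fin N) :=
    Sum.elim (fun li => if li.2 ∈ J then some li.2 else none) (fun _ => none) with hπJ
  set FJ : (Fin M → Bool) → Option (Fin N) → (idx M N → Bool) → ℝ := fun y o b =>
    Option.elim o (if ((fun l => Yc Sd b l) = y ∧ s' ≤ (n0 y : ℝ)) then 1 else 0)
      (fun k => if k ∈ J
        then (if (∑ l : Fin M, (if y l = false then (if b (xco l k) = true then (1:ℝ) else 0) else 0)) < τ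
          then 1 else 0)
        else 1) with hFJ
  -- pointwise decomposition over the Y-pattern
  have hpt : ∀ b : idx M N → Bool,
      (if ((∀ j ∈ J, (zc Sd b j : ℝ) < τ) ∧ s' ≤ (M0c Sd b : ℝ)) then (1:ℝ) else 0)
        = ∑ y : Fin M → Bool, ∏ o : Option (Fin N), FJ y o b := by
    intro b
    rw [Finset.sum_eq_single_of_mem (fun l => Yc Sd b l) (Finset.mem_univ _) ?hoth]
    case hoth =>
      intro y _ hy
      refine Finset.prod_eq_zero (Finset.mem_univ none) ?_
      simp only [hFJ, Option.elim]
      rw [if_neg]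
      rintro ⟨hc, -⟩
      exact hy hc.symm
    rw [Fintype.prod_option]
    simp only [hFJ, Option.elim]
    rw [Finset.prod_ite_mem Finset.univ J, Finset.univ_inter, Finset.prod_boole]
    have hn0 : n0 (fun l => Yc Sd b l) = M0c Sd b := rfl
    have hcols : ∀ j : Fin N,
        (∑ l : Fin M, (if (fun l => Yc Sd b l) l = false
            then (if b (xco l j) = true then (1:ℝ) else 0) else 0))
          = (zc Sd b j : ℝ) := by
      intro j
      rw [zc_cast]
      refine Finset.sum_congr rfl fun l _ => ?_
      by_cases hb : b (xco l j) = true <;> by_cases hy : Yc Sd b l = false <;>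
        simp [hb, hy]
    simp only [hcols, hn0, true_and, eq_self_iff_true]
    by_cases hA : (∀ j ∈ J, (zc Sd b j : ℝ) < τ) <;> by_cases hB : s' ≤ (M0c Sd b : ℝ) <;>
      simp [hA, hB]
  rw [Ex_congr hpt, Ex_sum w Finset.univ (fun y b => ∏ o : Option (Fin N), FJ y o b)]
  -- factor each y-term
  have hfac : ∀ y : Fin M → Bool,
      Ex w (fun b => ∏ o : Option (Fin N), FJ y o b) = ∏ o : Option (Fin N), Ex w (FJ y o) := by
    intro y
    refine Ex_factor w hw1 πJ Finset.univ (FJ y) ?_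
    rintro (_ | k) - b b' hh
    · simp only [hFJ, Option.elim]
      have hyy : (fun l => Yc Sd b l) = (fun l => Yc Sd b' l) := by
        funext l
        unfold Yc
        rw [Finset.sup_congr rfl (fun i hi => by
          rw [hh (dco i l) rfl, hh (xco l i) (by
            show (if i ∈ J then some i else none : Option (Fin N)) = none
            exact if_neg (fun hiJ => hJSd i hiJ hi))]),
          hh (wco l) rfl]
      rw [hyy]
    · by_cases hk : k ∈ J
      · simp only [hFJ, Option.elim, if_pos hk]
        have : ∀ l : Fin M, (if y l = false then (if b (xco l k) = true then (1:ℝ) else 0) else 0)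
            = (if y l = false then (if b' (xco l k) = true then (1:ℝ) else 0) else 0) := by
          intro l
          rw [hh (xco l k) (by
            show (if k ∈ J then some k else none : Option (Fin N)) = some k
            exact if_pos hk)]
        rw [Finset.sum_congr rfl (fun l _ => this l)]
      · simp only [hFJ, Option.elim, if_neg hk]
  rw [Finset.sum_congr rfl (fun y _ => hfac y)]
  -- bound each y-term
  have hbnd : ∀ y : Fin M → Bool,
      (∏ o : Option (Fin N), Ex w (FJ y o)) ≤ Ex w (FJ y none) * cb ^ J.card := by
    intro y
    rw [Fintype.prod_option]
    by_cases hy : s' ≤ (n0 y : ℝ)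
    · have hnn : ∀ o, 0 ≤ Ex w (FJ y o) := by
        rintro (_ | k) <;>
          refine Ex_nonneg hw0 fun b => ?_
        · simp only [hFJ, Option.elim]
          positivity
        · simp only [hFJ, Option.elim]
          by_cases hk : k ∈ J
          · rw [if_pos hk]
            positivity
          · rw [if_neg hk]
            norm_num
      refine mul_le_mul_of_nonneg_left ?_ (hnn none)
      have h1 : ∏ k : Fin N, Ex w (FJ y (some k)) = ∏ k ∈ J, Ex w (FJ y (some k)) := by
        refine (Finset.prod_subset (Finset.subset_univ J) fun k _ hk => ?_).symm
        have : ∀ b : idx M N → Bool, FJ y (some k) b = 1 := by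
          intro b
          simp only [hFJ, Option.elim, if_neg hk]
        rw [Ex_congr this, Ex_one w hw1]
      rw [h1, ← Finset.prod_const]
      refine Finset.prod_le_prod (fun k hk => hnn (some k)) fun k hk => ?_
      have : ∀ b : idx M N → Bool, FJ y (some k) b
          = if (∑ l : Fin M, (if y l = false then (if b (xco l k) = true then (1:ℝ) else 0) else 0)) < τ
            then 1 else 0 := by
        intro b
        simp only [hFJ, Option.elim, if_pos hk]
      rw [Ex_congr this, hwdef]
      exact hcol y hy k hk
    · have h0 : Ex w (FJ y none) = 0 := by
        have : ∀ b : idx M N → Bool, FJ y none b = 0 := by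
          intro b
          simp only [hFJ, Option.elim]
          rw [if_neg]
          rintro ⟨-, hc⟩
          exact hy hc
        rw [Ex_congr this, Ex_zero]
      rw [h0, zero_mul, zero_mul]
  -- sum the y-terms
  have hsum1 : (∑ y : Fin M → Bool, Ex w (FJ y none)) ≤ 1 := by
    have e3 : (∑ y : Fin M → Bool, Ex w (FJ y none))
        = Ex w (fun b => ∑ y : Fin M → Bool, FJ y none b) :=
      (Ex_sum w Finset.univ (fun y b => FJ y none b)).symm
    rw [e3]
    have hptw : ∀ b : idx M N → Bool, (∑ y : Fin M → Bool, FJ y none b) ≤ 1 := by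
      intro b
      have hle : ∀ y : Fin M → Bool,
          FJ y none b ≤ (if (fun l => Yc Sd b l) = y then (1:ℝ) else 0) := by
        intro y
        simp only [hFJ, Option.elim]
        by_cases h : ((fun l => Yc Sd b l) = y ∧ s' ≤ (n0 y : ℝ))
        · rw [if_pos h, if_pos h.1]
        · rw [if_neg h]
          by_cases h2 : (fun l => Yc Sd b l) = y <;> simp [h2]
      calc (∑ y : Fin M → Bool, FJ y none b)
          ≤ ∑ y : Fin M → Bool, (if (fun l => Yc Sd b l) = y then (1:ℝ) else 0) :=
            Finset.sum_le_sum fun y _ => hle y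
        _ = 1 := by rw [Finset.sum_ite_eq]; simp
    calc Ex w (fun b => ∑ y : Fin M → Bool, FJ y none b)
        ≤ Ex w (fun _ => 1) := Ex_mono hw0 hptw
      _ = 1 := Ex_one w hw1
  calc (∑ y : Fin M → Bool, ∏ o : Option (Fin N), Ex w (FJ y o))
      ≤ ∑ y : Fin M → Bool, Ex w (FJ y none) * cb ^ J.card :=
        Finset.sum_le_sum fun y _ => hbnd y
    _ = (∑ y : Fin M → Bool, Ex w (FJ y none)) * cb ^ J.card := by rw [← Finset.sum_mul]
    _ ≤ 1 * cb ^ J.card :=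
        mul_le_mul_of_nonneg_right hsum1 (pow_nonneg hcb0 _)
    _ = cb ^ J.card := one_mul _
end tbj

section final
variable {M N : ℕ}

lemma Ex_add {ι : Type*} [Fintype ι] [DecidableEq ι] (w : ι → Bool → ℝ)
    (F G : (ι → Bool) → ℝ) :
    Ex w (fun b => F b + G b) = Ex w F + Ex w G := by
  unfold Ex
  rw [← Finset.sum_add_distrib]
  exact Finset.sum_congr rfl fun b _ => by ring

/-- the pointwise union bound -/
lemma union_ptw (Sd : Finset (Fin N)) (L : ℕ) (τ s' : ℝ) (b : idx M N → Bool)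
    (hL1 : 1 ≤ L) (hLn : L ≤ (Finset.univ.filter (fun j : Fin N => j ∉ Sd)).card) :
    (if ¬ (∀ i ∈ Sd, L ≤ (Finset.univ.filter fun j : Fin N =>
        j ∉ Sd ∧ zc Sd b i < zc Sd b j).card) then (1:ℝ) else 0)
      ≤ (∑ i ∈ Sd, if τ ≤ (zc Sd b i : ℝ) then (1:ℝ) else 0)
        + (if (M0c Sd b : ℝ) < s' then (1:ℝ) else 0)
        + (∑ J ∈ Finset.powersetCard
            ((Finset.univ.filter (fun j : Fin N => j ∉ Sd)).card - (L - 1))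
            (Finset.univ.filter (fun j : Fin N => j ∉ Sd)),
            if ((∀ j ∈ J, (zc Sd b j : ℝ) < τ) ∧ s' ≤ (M0c Sd b : ℝ)) then (1:ℝ) else 0) := by
  classical
  set Tc := Finset.univ.filter (fun j : Fin N => j ∉ Sd) with hTc
  set mm := Tc.card - (L - 1) with hmm
  have hnn1 : (0:ℝ) ≤ ∑ i ∈ Sd, if τ ≤ (zc Sd b i : ℝ) then (1:ℝ) else 0 :=
    Finset.sum_nonneg fun i _ => by positivity
  have hnn2 : (0:ℝ) ≤ if (M0c Sd b : ℝ) < s' then (1:ℝ) else 0 := by positivity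
  have hnn3 : (0:ℝ) ≤ ∑ J ∈ Finset.powersetCard mm Tc,
      if ((∀ j ∈ J, (zc Sd b j : ℝ) < τ) ∧ s' ≤ (M0c Sd b : ℝ)) then (1:ℝ) else 0 :=
    Finset.sum_nonneg fun J _ => by positivity
  by_cases hΦ : (∀ i ∈ Sd, L ≤ (Finset.univ.filter fun j : Fin N =>
      j ∉ Sd ∧ zc Sd b i < zc Sd b j).card)
  · rw [if_neg (by simpa using hΦ)]
    linarith
  · rw [if_pos hΦ]
    by_cases hc1 : ∃ i ∈ Sd, τ ≤ (zc Sd b i : ℝ)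
    · obtain ⟨i, hi, hzi⟩ := hc1
      have h1 : (1:ℝ) ≤ ∑ i ∈ Sd, if τ ≤ (zc Sd b i : ℝ) then (1:ℝ) else 0 :=
        calc (1:ℝ) = if τ ≤ (zc Sd b i : ℝ) then (1:ℝ) else 0 := (if_pos hzi).symm
          _ ≤ _ := Finset.single_le_sum
            (f := fun i => if τ ≤ (zc Sd b i : ℝ) then (1:ℝ) else 0)
            (fun i _ => by positivity) hi
      linarith
    · push_neg at hc1
      by_cases hc2 : (M0c Sd b : ℝ) < s'
      · rw [if_pos hc2]
        linarith
      · push_neg at hc2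
        -- extract a bad subset J
        set Bad := Tc.filter (fun j => (zc Sd b j : ℝ) < τ) with hBad
        by_cases hc3 : mm ≤ Bad.card
        · obtain ⟨J, hJBad, hJcard⟩ := Finset.exists_subset_card_eq hc3
          have hJmem : J ∈ Finset.powersetCard mm Tc :=
            Finset.mem_powersetCard.2 ⟨hJBad.trans (Finset.filter_subset _ _), hJcard⟩
          have hJall : ∀ j ∈ J, (zc Sd b j : ℝ) < τ := by
            intro j hj
            exact (Finset.mem_filter.1 (hJBad hj)).2
          have h1 : (1:ℝ) ≤ ∑ J ∈ Finset.powersetCard mm Tc,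
              if ((∀ j ∈ J, (zc Sd b j : ℝ) < τ) ∧ s' ≤ (M0c Sd b : ℝ)) then (1:ℝ) else 0 :=
            calc (1:ℝ) = if ((∀ j ∈ J, (zc Sd b j : ℝ) < τ) ∧ s' ≤ (M0c Sd b : ℝ))
                  then (1:ℝ) else 0 := (if_pos ⟨hJall, hc2⟩).symm
              _ ≤ _ := Finset.single_le_sum
                (f := fun J => if ((∀ j ∈ J, (zc Sd b j : ℝ) < τ) ∧ s' ≤ (M0c Sd b : ℝ))
                  then (1:ℝ) else 0)
                (fun J _ => by positivity) hJmem
          linarith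
        · exfalso
          apply hΦ
          intro i hi
          push_neg at hc3
          set Good := Tc.filter (fun j => ¬ ((zc Sd b j : ℝ) < τ)) with hGood
          have hcards : Bad.card + Good.card = Tc.card :=
            Finset.card_filter_add_card_filter_not _
          have hGL : L ≤ Good.card := by omega
          refine le_trans hGL (Finset.card_le_card ?_)
          intro j hj
          obtain ⟨hjT, hjτ⟩ := Finset.mem_filter.1 hj
          rw [Finset.mem_filter]
          refine ⟨Finset.mem_univ j, (Finset.mem_filter.1 hjT).2, ?_⟩
          have h1 : (zc Sd b i : ℝ) < (zc Sd b j : ℝ) :=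
            lt_of_lt_of_le (hc1 i hi) (not_lt.1 hjτ)
          exact_mod_cast h1

end final

section numerics

lemma numA (MC r0 g : ℝ) (hM : 0 ≤ MC) (hr : 0 ≤ r0) (hg0 : 0 < g) (hg1 : g ≤ 1)
    (hE : Real.exp (g/4) - 1 ≤ g/4 + (g/4)^2) :
    MC * ((1 - g) * r0) * (Real.exp (g/4) - 1) - g/4 * (MC * r0 * (1 - g/2))
      ≤ -(MC * r0 * g^2 / 16) := by
  have hA0 : 0 ≤ MC * ((1-g)*r0) := mul_nonneg hM (mul_nonneg (by linarith) hr)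
  have h1 : MC * ((1-g)*r0) * (Real.exp (g/4) - 1) ≤ MC*((1-g)*r0)*(g/4+(g/4)^2) :=
    mul_le_mul_of_nonneg_left hE hA0
  nlinarith [mul_nonneg (mul_nonneg hM hr) (pow_nonneg hg0.le 3), h1]

lemma numB1 (MC ΓR r0 g : ℝ) (hM : 0 ≤ MC) (hΓ : 0 ≤ ΓR) (hr0 : 0 ≤ r0) (hrΓ : r0 ≤ ΓR)
    (hg0 : 0 < g) (hg1 : g ≤ 1) (hE : Real.exp (-(g/16)) ≤ 1 - g/16 + (g/16)^2) :
    g/16 * (MC*ΓR*(1-g/8)) - MC*ΓR*(1 - Real.exp (-(g/16))) ≤ -(MC*r0*g^2/256) := by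
  have hA0 : 0 ≤ MC*ΓR := mul_nonneg hM hΓ
  have h1 : MC*ΓR*(g/16-(g/16)^2) ≤ MC*ΓR*(1 - Real.exp (-(g/16))) :=
    mul_le_mul_of_nonneg_left (by linarith) hA0
  nlinarith [mul_nonneg (mul_nonneg hM (sub_nonneg.2 hrΓ)) (sq_nonneg g), h1]

lemma numCol (MC pr ΓR g n0R : ℝ) (hM : 0 ≤ MC) (hpr : 0 ≤ pr) (hΓ : 0 ≤ ΓR)
    (hg0 : 0 < g) (hg1 : g ≤ 1) (hE : Real.exp (-(3*g/16)) ≤ 1 - 3*g/16 + (3*g/16)^2)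
    (hn0 : MC*ΓR*(1-g/8) ≤ n0R) :
    3*g/16 * (MC*(pr*ΓR)*(1-g/2)) - pr*(1 - Real.exp (-(3*g/16)))*n0R
      ≤ -(9/256*(MC*(pr*ΓR)*g^2)) := by
  have htt : 0 ≤ 3*g/16 - (3*g/16)^2 := by nlinarith
  have h1 : pr*(3*g/16-(3*g/16)^2)*(MC*ΓR*(1-g/8)) ≤ pr*(1-Real.exp (-(3*g/16)))*n0R := by
    refine mul_le_mul ?_ hn0 ?_ ?_
    · exact mul_le_mul_of_nonneg_left (by linarith) hpr
    · have h8 : (0:ℝ) ≤ 1 - g/8 := by linarith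
      positivity
    · have h9 : (0:ℝ) ≤ 1 - Real.exp (-(3*g/16)) := by nlinarith
      positivity
  nlinarith [mul_nonneg (mul_nonneg (mul_nonneg hM hpr) hΓ) (pow_nonneg hg0.le 3), h1]

lemma numF1 (c0 lk ρ : ℝ) (hc0 : 0 ≤ c0) (hlk0 : 0 < lk) (hlk2 : Real.log 2 ≤ lk)
    (hρ : 512*(1+c0)*lk ≤ ρ) :
    lk + -(ρ/16) ≤ -(c0*lk) - Real.log 2 := by
  nlinarith [mul_nonneg hc0 hlk0.le]

lemma numF2 (c0 lk ρ : ℝ) (hc0 : 0 ≤ c0) (hlk0 : 0 < lk) (hlk2 : Real.log 2 ≤ lk)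
    (hρ : 512*(1+c0)*lk ≤ ρ) :
    -(ρ/256) ≤ -(c0*lk) - Real.log 2 := by
  nlinarith [mul_nonneg hc0 hlk0.le]

lemma numF3 (c0 LC lcc X : ℝ) (hc0 : 0 ≤ c0) (hLC0 : 0 < LC) (hlcc : lcc ≤ LC)
    (hX : 32*(1+c0)*LC ≤ X) :
    lcc + -(9/256*X) ≤ -(c0*LC) := by
  nlinarith [mul_nonneg hc0 hLC0.le]

end numerics

end GT8aux

noncomputable def GTModel.Y {Ω : Type} [MeasureSpace Ω] {M N : ℕ} {p u q : ℝ}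
    (G : GTModel Ω M N p u q) (Sd : Finset (Fin N)) (l : Fin M) (ω : Ω) : Bool :=
  (Sd.sup fun i => G.d i l ω && G.X l i ω) || G.w l ω

set_option maxHeartbeats 2000000 in
open GT8aux in
theorem stmt_8 (c0 : ℝ) (hc0 : 0 < c0) :
    ∃ Ca1 Ca2 : ℝ, 0 < Ca1 ∧ 0 < Ca2 ∧
      ∀ (Ω : Type) [MeasureSpace Ω] [IsProbabilityMeasure (ℙ : Measure Ω)]
        (M N K L : ℕ) (u q : ℝ)
        (Sd : Finset (Fin N)) (G : GTModel Ω M N (1 / ((1 - u) * K)) u q),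
        2 ≤ K → K < N → 1 ≤ L → L ≤ N - K → 1 ≤ M →
        0 ≤ u → u < 1 / 2 → 0 ≤ q → q < 1 / 2 → Sd.card = K →
        (1 + c0) * ((K : ℝ) * (1 - u) /
            ((1 - q) * (1 - u * K / ((K : ℝ) - 1)) ^ 2)) *
          (Ca1 * Real.log ((K : ℝ) * ((N - K).choose (L - 1) : ℝ))
              / (((N - K) - (L - 1) : ℕ) : ℝ)
            + Ca2 * Real.log (K : ℝ)) ≤ (M : ℝ) →
        ENNReal.ofReal
            (1 - Real.exp (-(c0 * Real.log ((K : ℝ) * ((N - K).choose (L - 1) : ℝ))))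
              - Real.exp (-(c0 * Real.log (K : ℝ)))) ≤
          (ℙ : Measure Ω) {ω | ∀ i ∈ Sd,
            L ≤ (Finset.univ.filter fun j : Fin N =>
                j ∉ Sd ∧
                (Finset.univ.filter fun l : Fin M =>
                    G.X l i ω = true ∧ G.Y Sd l ω = false).card <
                (Finset.univ.filter fun l : Fin M =>
                    G.X l j ω = true ∧ G.Y Sd l ω = false).card).card} := by
  classical
  refine ⟨128, 2048, by norm_num, by norm_num, ?_⟩
  intro Ω _ _ M N K L u q Sd G hK hKN hL1 hLNK hM1 hu0 hu2 hq0 hq2 hSdcard hM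
  -- ==================== basic real facts ====================
  have hKR2 : (2:ℝ) ≤ (K:ℝ) := by exact_mod_cast hK
  have hKR0 : (0:ℝ) < K := by linarith
  have h1u0 : (0:ℝ) < 1 - u := by linarith
  have hu1 : u ≤ 1 := by linarith
  have hq1 : q ≤ 1 := by linarith
  have h1q0 : (0:ℝ) < 1 - q := by linarith
  have hdenom : (1:ℝ) ≤ (1 - u) * K := by
    have h := mul_le_mul (by linarith : (1/2:ℝ) ≤ 1 - u) hKR2 (by norm_num) (by linarith)
    linarith
  have hp0' : (0:ℝ) ≤ 1 / ((1 - u) * (K:ℝ)) := by positivity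
  have hp1' : 1 / ((1 - u) * (K:ℝ)) ≤ 1 := by
    rw [div_le_one (by linarith)]
    linarith
  -- ==================== event identification ====================
  set Φs : (idx M N → Bool) → Prop := fun b => ∀ i ∈ Sd,
    L ≤ (Finset.univ.filter fun j : Fin N => j ∉ Sd ∧ zc Sd b i < zc Sd b j).card with hΦsdef
  have hevent : {ω : Ω | ∀ i ∈ Sd,
      L ≤ (Finset.univ.filter fun j : Fin N =>
          j ∉ Sd ∧
          (Finset.univ.filter fun l : Fin M =>
              G.X l i ω = true ∧ G.Y Sd l ω = false).card <
          (Finset.univ.filter fun l : Fin M =>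
              G.X l j ω = true ∧ G.Y Sd l ω = false).card).card}
      = {ω : Ω | Φs (vvec G ω)} := rfl
  rw [hevent, master G hp0' hu0 hu1 hq0 (wfun_nonneg hp0' hp1' hu0 hu1 hq0 hq1 M N) Φs]
  set pR : ℝ := 1 / ((1 - u) * (K : ℝ)) with hpRdef
  have hpR0 : 0 < pR := by rw [hpRdef]; positivity
  have hpR1 : pR ≤ 1 := by
    rw [hpRdef, div_le_one (by linarith)]
    linarith
  have hup : (1 - u) * pR = 1 / (K:ℝ) := by
    rw [hpRdef]
    field_simp
  set β : ℝ := 1 - 1/(K:ℝ) with hβdef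
  have hβeq : 1 - (1 - u) * pR = β := by rw [hup]
  have hKinv : 1/(K:ℝ) ≤ 1/2 := by
    rw [div_le_div_iff₀ hKR0 (by norm_num)]
    linarith
  have hKinv0 : 0 < 1/(K:ℝ) := by positivity
  have hβ0 : 0 < β := by rw [hβdef]; linarith
  have hβ1 : β ≤ 1 := by rw [hβdef]; linarith
  set ΓR : ℝ := (1 - q) * β ^ K with hΓdef
  have hβK0 : 0 < β ^ K := pow_pos hβ0 K
  have hβK1 : β ^ K ≤ 1 := pow_le_one₀ hβ0.le hβ1
  have hΓ0 : 0 < ΓR := by rw [hΓdef]; positivity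
  have hΓ1 : ΓR ≤ 1 := by
    rw [hΓdef]
    exact mul_le_one₀ (by linarith) hβK0.le hβK1
  set r0 : ℝ := pR * ΓR with hr0def
  have hr00 : 0 < r0 := mul_pos hpR0 hΓ0
  have hr0Γ : r0 ≤ ΓR := by
    rw [hr0def]
    calc pR * ΓR ≤ 1 * ΓR := mul_le_mul_of_nonneg_right hpR1 hΓ0.le
      _ = ΓR := one_mul _
  set γ0 : ℝ := u * (K:ℝ) / ((K:ℝ) - 1) with hγdef
  have hK1 : (0:ℝ) < (K:ℝ) - 1 := by linarith
  have hγ00 : 0 ≤ γ0 := by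
    rw [hγdef]
    positivity
  have hγ2u : γ0 ≤ 2*u := by
    rw [hγdef, div_le_iff₀ hK1]
    have h := mul_le_mul_of_nonneg_left (by linarith : (K:ℝ) ≤ 2*((K:ℝ)-1)) hu0
    calc u * (K:ℝ) ≤ u * (2*((K:ℝ)-1)) := h
      _ = 2*u*((K:ℝ)-1) := by ring
  have hγ01 : γ0 < 1 := by linarith
  set g : ℝ := 1 - γ0 with hgdef
  have hg0 : 0 < g := by rw [hgdef]; linarith
  have hg1 : g ≤ 1 := by rw [hgdef]; linarith
  have hγg : γ0 = 1 - g := by rw [hgdef]; ring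
  -- r1 identity
  have hKm1 : K - 1 + 1 = K := by omega
  have hβsp : β ^ K = β ^ (K-1) * β := by
    conv_lhs => rw [← hKm1]
    rw [pow_succ]
  have hβfrac : β = ((K:ℝ) - 1)/(K:ℝ) := by
    rw [hβdef]
    field_simp
  have hr1id : pR * u * ((1 - q) * β ^ (K - 1)) = γ0 * r0 := by
    rw [hγdef, hr0def, hΓdef, hβsp, hβfrac]
    field_simp
  -- ==================== thresholds ====================
  set τ : ℝ := M * r0 * (1 - g/2) with hτdef
  set s' : ℝ := M * ΓR * (1 - g/8) with hs'def
  set ρ : ℝ := M * r0 * g^2 with hρdef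
  have hMR0 : (0:ℝ) ≤ M := Nat.cast_nonneg M
  have hρ0 : 0 ≤ ρ := by rw [hρdef]; positivity
  -- ==================== the index machinery ====================
  set w0 := wfun pR u q M N with hw0def
  have hw1 := wfun_sum1 pR u q M N
  have hw0 := wfun_nonneg hpR0.le hpR1 hu0 hu1 hq0 hq1 M N
  set Tc := Finset.univ.filter (fun j : Fin N => j ∉ Sd) with hTcdef
  have hTceq : Tc = Sdᶜ := by
    ext x
    simp [hTcdef]
  have hTcn : Tc.card = N - K := by
    rw [hTceq, Finset.card_compl, Fintype.card_fin, hSdcard]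
  set mm := Tc.card - (L - 1) with hmmdef
  have hLn : L ≤ Tc.card := by rw [hTcn]; exact hLNK
  have hmm1 : 1 ≤ mm := by rw [hmmdef, hTcn]; omega
  have hmmR1 : (1:ℝ) ≤ (mm:ℝ) := by exact_mod_cast hmm1
  have hmmR0 : (0:ℝ) < (mm:ℝ) := by linarith
  set CC : ℕ := (N - K).choose (L - 1) with hCCdef
  have hCC1 : 1 ≤ CC := Nat.choose_pos (by omega)
  have hCCR1 : (1:ℝ) ≤ (CC:ℝ) := by exact_mod_cast hCC1
  set LC : ℝ := Real.log ((K:ℝ) * (CC:ℝ)) with hLCdef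
  have hlog2 : (0:ℝ) < Real.log 2 := Real.log_pos (by norm_num)
  have hLK : Real.log 2 ≤ Real.log (K:ℝ) := Real.log_le_log (by norm_num) hKR2
  have hlogK0 : 0 < Real.log (K:ℝ) := lt_of_lt_of_le hlog2 hLK
  have hLC2 : Real.log 2 ≤ LC := by
    rw [hLCdef]
    refine Real.log_le_log (by norm_num) ?_
    calc (2:ℝ) = 2 * 1 := by norm_num
      _ ≤ (K:ℝ) * (CC:ℝ) := mul_le_mul hKR2 hCCR1 (by norm_num) (by linarith)
  have hLC0 : 0 < LC := lt_of_lt_of_le hlog2 hLC2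
  -- ==================== lower bound on ρ ====================
  have hmmcast : (((N - K) - (L - 1) : ℕ) : ℝ) = (mm:ℝ) := by
    rw [hmmdef, hTcn]
  have hXr : ((K:ℝ) * (1 - u) / ((1 - q) * g^2)) * (r0 * g^2) = β ^ K := by
    rw [hr0def, hΓdef]
    have hKpR : (K:ℝ) * ((1-u) * pR) = 1 := by
      rw [hup]
      field_simp
    rw [div_mul_eq_mul_div, div_eq_iff (mul_ne_zero h1q0.ne' (pow_ne_zero _ hg0.ne'))]
    linear_combination ((1-q) * β ^ K * g^2) * hKpR
  have hS1 : (0:ℝ) ≤ 128 * LC / (mm:ℝ) := by positivity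
  have hS2 : (0:ℝ) ≤ 2048 * Real.log (K:ℝ) := by positivity
  have hkey : (1 + c0) * (128 * LC / (mm:ℝ) + 2048 * Real.log (K:ℝ)) * β ^ K ≤ ρ := by
    have hM' := hM
    rw [hmmcast] at hM'
    have h2 := mul_le_mul_of_nonneg_right hM' (by positivity : (0:ℝ) ≤ r0 * g^2)
    calc (1 + c0) * (128 * LC / (mm:ℝ) + 2048 * Real.log (K:ℝ)) * β ^ K
        = (1 + c0) * ((K:ℝ) * (1 - u) / ((1 - q) * g^2))
            * (128 * LC / (mm:ℝ) + 2048 * Real.log (K:ℝ)) * (r0 * g^2) := by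
          rw [← hXr]
          ring
      _ ≤ (M:ℝ) * (r0 * g^2) := h2
      _ = ρ := by rw [hρdef]; ring
  have hquarter : (1/4:ℝ) ≤ β ^ K := quarter_le_pow K hK
  have hSnn : (0:ℝ) ≤ 128 * LC / (mm:ℝ) + 2048 * Real.log (K:ℝ) := by linarith
  have hc01 : (0:ℝ) ≤ 1 + c0 := by linarith
  have hρ2 : 512 * (1 + c0) * Real.log (K:ℝ) ≤ ρ := by
    have ha : (1 + c0) * (2048 * Real.log (K:ℝ)) ≤ (1 + c0) * (128 * LC / (mm:ℝ)
        + 2048 * Real.log (K:ℝ)) :=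
      mul_le_mul_of_nonneg_left (by linarith) hc01
    have hb : (1 + c0) * (2048 * Real.log (K:ℝ)) * (1/4)
        ≤ (1 + c0) * (128 * LC / (mm:ℝ) + 2048 * Real.log (K:ℝ)) * β ^ K :=
      mul_le_mul ha hquarter (by norm_num) (by positivity)
    linarith [hb.trans hkey]
  have hmρ : 32 * (1 + c0) * LC ≤ (mm:ℝ) * ρ := by
    have ha : (1 + c0) * (128 * LC / (mm:ℝ)) ≤ (1 + c0) * (128 * LC / (mm:ℝ)
        + 2048 * Real.log (K:ℝ)) :=
      mul_le_mul_of_nonneg_left (by linarith) hc01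
    have hb : (1 + c0) * (128 * LC / (mm:ℝ)) * (1/4)
        ≤ (1 + c0) * (128 * LC / (mm:ℝ) + 2048 * Real.log (K:ℝ)) * β ^ K :=
      mul_le_mul ha hquarter (by norm_num) (by positivity)
    have h1 : (1 + c0) * (128 * LC / (mm:ℝ)) * (1/4) ≤ ρ := hb.trans hkey
    have h2 := mul_le_mul_of_nonneg_left h1 hmmR0.le
    have h3 : (mm:ℝ) * ((1 + c0) * (128 * LC / (mm:ℝ)) * (1/4)) = 32 * (1 + c0) * LC := by
      field_simp
      ring
    linarith [h3 ▸ h2]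
  -- ==================== tail bounds with chosen t ====================
  have hNA : ∀ i ∈ Sd, Ex w0 (fun b => if τ ≤ (zc Sd b i : ℝ) then (1:ℝ) else 0)
      ≤ Real.exp (-(ρ/16)) := by
    intro i hi
    have ht0 : (0:ℝ) < g/4 := by linarith
    refine (tail_A hpR0.le hpR1 hu0 hu1 hq0 hq1 Sd i hi ht0 τ).trans ?_
    rw [Real.exp_le_exp, hSdcard, hβeq, hr1id]
    rw [hτdef, hρdef, hγg]
    exact numA (M:ℝ) r0 g hMR0 hr00.le hg0 hg1
      (by linarith [exp_le_quad (x := g/4) (by linarith : (0:ℝ) ≤ g/4) (by linarith : g/4 ≤ 1)])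
  have hNB1 : Ex w0 (fun b => if (M0c Sd b : ℝ) < s' then (1:ℝ) else 0)
      ≤ Real.exp (-(ρ/256)) := by
    have ht0 : (0:ℝ) < g/16 := by linarith
    refine (tail_B1 hpR0.le hpR1 hu0 hu1 hq0 hq1 Sd ht0 s').trans ?_
    rw [Real.exp_le_exp, hSdcard, hβeq, ← hΓdef]
    rw [hs'def, hρdef]
    exact numB1 (M:ℝ) ΓR r0 g hMR0 hΓ0.le hr00.le hr0Γ hg0 hg1
      (exp_neg_le_quad (by linarith : (0:ℝ) ≤ g/16) (by linarith : g/16 ≤ 1))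
  have hs'0 : (0:ℝ) ≤ s' := by
    rw [hs'def]
    have : (0:ℝ) ≤ 1 - g/8 := by linarith
    positivity
  have hNCol : ∀ y : Fin M → Bool, s' ≤ (n0 y : ℝ) → ∀ j : Fin N,
      Ex w0 (fun b => if (∑ l : Fin M, (if y l = false
        then (if b (xco l j) = true then (1:ℝ) else 0) else 0)) < τ then 1 else 0)
      ≤ Real.exp (-(9/256 * ρ)) := by
    intro y hy j
    have ht0 : (0:ℝ) < 3*g/16 := by linarith
    refine (tail_col hpR0.le hpR1 hu0 hu1 hq0 hq1 y j ht0 τ).trans ?_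
    rw [Real.exp_le_exp]
    rw [hs'def] at hy
    rw [hτdef, hρdef, hr0def]
    exact numCol (M:ℝ) pR ΓR g (n0 y : ℝ) hMR0 hpR0.le hΓ0.le hg0 hg1
      (exp_neg_le_quad (by linarith : (0:ℝ) ≤ 3*g/16) (by linarith : 3*g/16 ≤ 1)) hy
  have hNBJ : ∀ J ∈ Finset.powersetCard mm Tc,
      Ex w0 (fun b => if ((∀ j ∈ J, (zc Sd b j : ℝ) < τ) ∧ s' ≤ (M0c Sd b : ℝ))
        then (1:ℝ) else 0) ≤ Real.exp (-(9/256*ρ)) ^ mm := by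
    intro J hJ
    obtain ⟨hJsub, hJcard⟩ := Finset.mem_powersetCard.1 hJ
    have hJSd : ∀ k ∈ J, k ∉ Sd := fun k hk => (Finset.mem_filter.1 (hJsub hk)).2
    have hb := tail_BJ hpR0.le hpR1 hu0 hu1 hq0 hq1 Sd J hJSd τ s' (Real.exp (-(9/256*ρ)))
      (Real.exp_pos _).le (fun y hy j _ => hNCol y hy j)
    rw [hJcard] at hb
    exact hb
  -- ==================== failure bound ====================
  have hfail : Ex w0 (fun b => if Φs b then (1:ℝ) else 0)
      = 1 - Ex w0 (fun b => if ¬ (∀ i ∈ Sd,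
          L ≤ (Finset.univ.filter fun j : Fin N =>
            j ∉ Sd ∧ zc Sd b i < zc Sd b j).card) then (1:ℝ) else 0) := by
    have hpt : ∀ b : idx M N → Bool, (if Φs b then (1:ℝ) else 0)
        = 1 + (-1) * (if ¬ (∀ i ∈ Sd,
            L ≤ (Finset.univ.filter fun j : Fin N =>
              j ∉ Sd ∧ zc Sd b i < zc Sd b j).card) then (1:ℝ) else 0) := by
      intro b
      by_cases h : Φs b
      · rw [if_pos h, if_neg (not_not_intro h)]
        ring
      · rw [if_neg h, if_pos h]
        ring
    rw [Ex_congr hpt, Ex_affine w0 hw1]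
    ring
  have hExF : Ex w0 (fun b => if ¬ (∀ i ∈ Sd,
        L ≤ (Finset.univ.filter fun j : Fin N =>
          j ∉ Sd ∧ zc Sd b i < zc Sd b j).card) then (1:ℝ) else 0)
      ≤ (K:ℝ) * Real.exp (-(ρ/16)) + Real.exp (-(ρ/256))
        + (CC:ℝ) * Real.exp (-(9/256*ρ)) ^ mm := by
    have step1 : Ex w0 (fun b => if ¬ (∀ i ∈ Sd,
          L ≤ (Finset.univ.filter fun j : Fin N =>
            j ∉ Sd ∧ zc Sd b i < zc Sd b j).card) then (1:ℝ) else 0)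
        ≤ Ex w0 (fun b =>
            ((∑ i ∈ Sd, if τ ≤ (zc Sd b i : ℝ) then (1:ℝ) else 0)
            + (if (M0c Sd b : ℝ) < s' then (1:ℝ) else 0))
            + (∑ J ∈ Finset.powersetCard mm Tc,
                if ((∀ j ∈ J, (zc Sd b j : ℝ) < τ) ∧ s' ≤ (M0c Sd b : ℝ))
                then (1:ℝ) else 0)) := by
      refine Ex_mono hw0 fun b => ?_
      have h := union_ptw Sd L τ s' b hL1 hLn
      rw [← hTcdef, ← hmmdef] at h
      exact h
    refine step1.trans ?_
    rw [Ex_add w0, Ex_add w0, Ex_sum w0, Ex_sum w0]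
    have b1 : ∑ i ∈ Sd, Ex w0 (fun b => if τ ≤ (zc Sd b i : ℝ) then (1:ℝ) else 0)
        ≤ (K:ℝ) * Real.exp (-(ρ/16)) := by
      calc ∑ i ∈ Sd, Ex w0 (fun b => if τ ≤ (zc Sd b i : ℝ) then (1:ℝ) else 0)
          ≤ ∑ _i ∈ Sd, Real.exp (-(ρ/16)) := Finset.sum_le_sum hNA
        _ = (K:ℝ) * Real.exp (-(ρ/16)) := by
            rw [Finset.sum_const, hSdcard, nsmul_eq_mul]
    have b3 : ∑ J ∈ Finset.powersetCard mm Tc, Ex w0 (fun b =>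
          if ((∀ j ∈ J, (zc Sd b j : ℝ) < τ) ∧ s' ≤ (M0c Sd b : ℝ)) then (1:ℝ) else 0)
        ≤ (CC:ℝ) * Real.exp (-(9/256*ρ)) ^ mm := by
      calc ∑ J ∈ Finset.powersetCard mm Tc, Ex w0 (fun b =>
            if ((∀ j ∈ J, (zc Sd b j : ℝ) < τ) ∧ s' ≤ (M0c Sd b : ℝ)) then (1:ℝ) else 0)
          ≤ ∑ _J ∈ Finset.powersetCard mm Tc, Real.exp (-(9/256*ρ)) ^ mm :=
            Finset.sum_le_sum hNBJ
        _ = (CC:ℝ) * Real.exp (-(9/256*ρ)) ^ mm := by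
            rw [Finset.sum_const, Finset.card_powersetCard, nsmul_eq_mul]
            congr 2
            rw [hTcn, hmmdef, hTcn, hCCdef]
            exact_mod_cast congrArg (Nat.cast : ℕ → ℝ) (Nat.choose_symm (by omega))
    linarith [hNB1]
  -- ==================== final numeric comparison ====================
  have hF1 : (K:ℝ) * Real.exp (-(ρ/16)) ≤ Real.exp (-(c0 * Real.log (K:ℝ))) / 2 := by
    calc (K:ℝ) * Real.exp (-(ρ/16)) = Real.exp (Real.log (K:ℝ) + -(ρ/16)) := by
          rw [Real.exp_add, Real.exp_log hKR0]
      _ ≤ Real.exp (-(c0*Real.log (K:ℝ)) - Real.log 2) := by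
          rw [Real.exp_le_exp]
          exact numF1 c0 (Real.log (K:ℝ)) ρ hc0.le hlogK0 hLK hρ2
      _ = Real.exp (-(c0 * Real.log (K:ℝ))) / 2 := by
          rw [Real.exp_sub, Real.exp_log (by norm_num : (0:ℝ) < 2)]
  have hF2 : Real.exp (-(ρ/256)) ≤ Real.exp (-(c0 * Real.log (K:ℝ))) / 2 := by
    calc Real.exp (-(ρ/256)) ≤ Real.exp (-(c0*Real.log (K:ℝ)) - Real.log 2) := by
          rw [Real.exp_le_exp]
          exact numF2 c0 (Real.log (K:ℝ)) ρ hc0.le hlogK0 hLK hρ2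
      _ = Real.exp (-(c0 * Real.log (K:ℝ))) / 2 := by
          rw [Real.exp_sub, Real.exp_log (by norm_num : (0:ℝ) < 2)]
  have hlogCC : Real.log (CC:ℝ) ≤ LC := by
    rw [hLCdef]
    refine Real.log_le_log (by linarith) ?_
    calc (CC:ℝ) = 1 * (CC:ℝ) := (one_mul _).symm
      _ ≤ (K:ℝ) * (CC:ℝ) := mul_le_mul_of_nonneg_right (by linarith) (by linarith)
  have hF3 : (CC:ℝ) * Real.exp (-(9/256*ρ)) ^ mm ≤ Real.exp (-(c0 * LC)) := by
    calc (CC:ℝ) * Real.exp (-(9/256*ρ)) ^ mm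
        = Real.exp (Real.log (CC:ℝ) + (mm:ℝ) * -(9/256*ρ)) := by
          rw [Real.exp_add, Real.exp_log (by linarith : (0:ℝ) < (CC:ℝ)),
            Real.exp_nat_mul]
      _ ≤ Real.exp (-(c0 * LC)) := by
          rw [Real.exp_le_exp]
          rw [show (mm:ℝ) * -(9/256*ρ) = -(9/256*((mm:ℝ)*ρ)) from by ring]
          exact numF3 c0 LC (Real.log (CC:ℝ)) ((mm:ℝ)*ρ) hc0.le hLC0 hlogCC hmρ
  -- ==================== conclude ====================
  refine ENNReal.ofReal_le_ofReal ?_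
  rw [hfail]
  linarith [hF1, hF2, hF3, hExF]
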